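/- arXiv:1911.11001 — 5 statements merged into one kernel-verified Lean document; each statement's English description precedes it below -/
import Mathlib

section
/- For every nonnegative integer n and 0<β<1, the squared L²-norm of z^n against the weight e^{-2φ(z)} with φ(z)=(log⁺|z|)^{β+1}, i.e. ∫_ℂ |z|^{2n} e^{-2(log⁺|z|)^{β+1}} dm(z), is comparable (up to absolute multiplicative constants depending only on β) to ((1+n)/(1+β))^{(1-β)/(2β)} · exp(2β((1+n)/(1+β))^{(1+β)/β}). -/
open MeasureTheory

noncomputable def phi (β : ℝ) (z : ℂ) : ℝ := (max (Real.log ‖z‖) 0) ^ (β + 1)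

noncomputable def mom (β : ℝ) (n : ℕ) : ℝ :=
  ∫ z : ℂ, ‖z‖ ^ (2 * n) * Real.exp (-2 * phi β z)

open Real Set

lemma tangent_le {p : ℝ} (hp : 1 ≤ p) {x y : ℝ} (hx : 0 ≤ x) (hy : 0 < y) :
    y ^ p + p * y ^ (p - 1) * (x - y) ≤ x ^ p := by
  have hs : -1 ≤ x / y - 1 := by
    have : 0 ≤ x / y := div_nonneg hx hy.le
    linarith
  have h := one_add_mul_self_le_rpow_one_add hs hp
  have h1 : (1 : ℝ) + (x / y - 1) = x / y := by ring
  rw [h1, Real.div_rpow hx hy.le] at h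
  have hyp : (0:ℝ) < y ^ p := Real.rpow_pos_of_pos hy p
  have h2 := mul_le_mul_of_nonneg_left h hyp.le
  have h3 : y ^ p * (x ^ p / y ^ p) = x ^ p := by field_simp
  have h4 : y ^ (p - 1) = y ^ p / y := Real.rpow_sub_one hy.ne' p
  rw [h3] at h2
  calc y ^ p + p * y ^ (p - 1) * (x - y)
      = y ^ p * (1 + p * (x / y - 1)) := by rw [h4]; field_simp
    _ ≤ x ^ p := h2

lemma tangent_ge {p : ℝ} (hp0 : 0 ≤ p) (hp1 : p ≤ 1) {x y : ℝ} (hx : 0 ≤ x) (hy : 0 < y) :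
    x ^ p ≤ y ^ p + p * y ^ (p - 1) * (x - y) := by
  have hs : -1 ≤ x / y - 1 := by
    have : 0 ≤ x / y := div_nonneg hx hy.le
    linarith
  have h := rpow_one_add_le_one_add_mul_self hs hp0 hp1
  have h1 : (1 : ℝ) + (x / y - 1) = x / y := by ring
  rw [h1, Real.div_rpow hx hy.le] at h
  have hyp : (0:ℝ) < y ^ p := Real.rpow_pos_of_pos hy p
  have h2 := mul_le_mul_of_nonneg_left h hyp.le
  have h3 : y ^ p * (x ^ p / y ^ p) = x ^ p := by field_simp
  have h4 : y ^ (p - 1) = y ^ p / y := Real.rpow_sub_one hy.ne' p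
  rw [h3] at h2
  calc x ^ p ≤ y ^ p * (1 + p * (x / y - 1)) := h2
    _ = y ^ p + p * y ^ (p - 1) * (x - y) := by rw [h4]; field_simp

noncomputable def tauF (β a : ℝ) : ℝ := (a / (β + 1)) ^ (1/β)
noncomputable def hhF (β a : ℝ) : ℝ := tauF β a ^ ((1 - β)/2)
noncomputable def ffF (β a : ℝ) (t : ℝ) : ℝ := 2*a*t - 2*t^(β+1)

section facts
variable {β a : ℝ} (hβ0 : 0 < β) (hβ1 : β < 1) (ha : 1 ≤ a)

include hβ0 ha

lemma ratio_pos : 0 < a / (β + 1) := by positivity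

include hβ1 in
lemma ratio_half : (1:ℝ)/2 ≤ a / (β + 1) := by
  rw [div_le_div_iff₀ (by norm_num) (by linarith)]
  linarith

lemma tau_pos : 0 < tauF β a := Real.rpow_pos_of_pos (ratio_pos hβ0 ha) _

lemma hh_pos : 0 < hhF β a := Real.rpow_pos_of_pos (tau_pos hβ0 ha) _

lemma tau_pow_beta : tauF β a ^ β = a / (β + 1) := by
  rw [tauF, ← Real.rpow_mul (ratio_pos hβ0 ha).le, one_div,
    inv_mul_cancel₀ hβ0.ne', Real.rpow_one]

lemma a_eq : (β + 1) * tauF β a ^ β = a := by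
  rw [tau_pow_beta hβ0 ha]; field_simp

lemma hh_sq : hhF β a * hhF β a * tauF β a ^ (β - 1) = 1 := by
  have ht := tau_pos hβ0 ha
  rw [hhF, ← Real.rpow_add ht, ← Real.rpow_add ht]
  rw [show (1-β)/2 + (1-β)/2 + (β-1) = 0 by ring, Real.rpow_zero]

lemma ff_tau : ffF β a (tauF β a) = 2*β*(a/(β+1)) ^ ((β+1)/β) := by
  have ht := tau_pos hβ0 ha
  have hr := ratio_pos hβ0 ha
  have e1 : (a/(β+1)) ^ ((β+1)/β) = tauF β a * (a/(β+1)) := by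
    rw [show (β+1)/β = 1/β + 1 by field_simp; ring, Real.rpow_add hr, Real.rpow_one, tauF]
  have e2 : tauF β a ^ (β+1) = (a/(β+1)) * tauF β a := by
    rw [Real.rpow_add ht, Real.rpow_one, tau_pow_beta hβ0 ha]
  rw [ffF, e1, e2]
  field_simp
  ring

lemma ff_tau_nonneg : 0 ≤ ffF β a (tauF β a) := by
  rw [ff_tau hβ0 ha]
  positivity

lemma hh_eq : hhF β a = (a/(β+1)) ^ ((1-β)/(2*β)) := by
  rw [hhF, tauF, ← Real.rpow_mul (ratio_pos hβ0 ha).le,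
    show (1/β)*((1-β)/2) = (1-β)/(2*β) by rw [div_mul_div_comm, one_mul, mul_comm β 2]]

lemma ff_max {t : ℝ} (ht : 0 ≤ t) : ffF β a t ≤ ffF β a (tauF β a) := by
  have htp := tau_pos hβ0 ha
  have h1 := tangent_le (p := β+1) (by linarith) ht htp
  rw [show β+1-1 = β by ring] at h1
  have ae' : (β+1) * tauF β a ^ β * (t - tauF β a) = a * (t - tauF β a) := by
    rw [a_eq hβ0 ha]
  rw [ffF, ffF]
  nlinarith [h1, ae']

end facts

section dev
variable {β a : ℝ} (hβ0 : 0 < β) (hβ1 : β < 1) (ha : 1 ≤ a)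
include hβ0 hβ1 ha

lemma ff_near {s : ℝ} (hs0 : 0 ≤ s) (hsh : s ≤ hhF β a) :
    ffF β a (tauF β a) - 2*(β+1)*β ≤ ffF β a (tauF β a + s) := by
  have htp : 0 < tauF β a := tau_pos hβ0 ha
  have hup : 0 < tauF β a + s := by linarith
  have h1 := tangent_le (p := β+1) (by linarith : (1:ℝ) ≤ β+1) htp.le hup
  rw [show β+1-1 = β by ring] at h1
  have h2 := tangent_ge (p := β) hβ0.le hβ1.le hup.le htp
  have hτb : (0:ℝ) < tauF β a ^ (β-1) := Real.rpow_pos_of_pos htp _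
  have e1 : (tauF β a + s)^β * s
      ≤ (tauF β a ^β + β * tauF β a ^(β-1) * ((tauF β a + s) - tauF β a)) * s :=
    mul_le_mul_of_nonneg_right h2 hs0
  have e1' := mul_le_mul_of_nonneg_left e1 (by linarith : (0:ℝ) ≤ β+1)
  have e2 : tauF β a ^ (β-1) * (s*s) ≤ tauF β a ^ (β-1) * (hhF β a * hhF β a) :=
    mul_le_mul_of_nonneg_left (mul_self_le_mul_self hs0 hsh) hτb.le
  have e2' := mul_le_mul_of_nonneg_left e2 (by positivity : (0:ℝ) ≤ (β+1)*β)
  have e4 : (β+1)*β*(tauF β a ^ (β-1) * (hhF β a * hhF β a)) = (β+1)*β := by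
    rw [show tauF β a ^ (β-1) * (hhF β a * hhF β a)
        = hhF β a * hhF β a * tauF β a ^ (β-1) by ring, hh_sq hβ0 ha, mul_one]
  have ae' : (β+1) * tauF β a ^ β * s = a * s := by rw [a_eq hβ0 ha]
  simp only [ffF]
  nlinarith [h1, e1', e2', e4, ae']

lemma ff_tail {t : ℝ} (ht : tauF β a + hhF β a ≤ t) :
    ffF β a t ≤ ffF β a (tauF β a)
      - (2*(β+1)*β*(1 + (2:ℝ) ^ ((β+1)/(2*β))) ^ (β-1)) * (tauF β a ^ (β-1) * hhF β a)
        * (t - (tauF β a + hhF β a)) := by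
  have htp : 0 < tauF β a := tau_pos hβ0 ha
  have hhp : 0 < hhF β a := hh_pos hβ0 ha
  have hup : 0 < tauF β a + hhF β a := by linarith
  have ht0 : (0:ℝ) ≤ t := by linarith
  have hMp : (0:ℝ) < (2:ℝ) ^ ((β+1)/(2*β)) := Real.rpow_pos_of_pos (by norm_num) _
  have h1 := tangent_le (p := β+1) (by linarith : (1:ℝ) ≤ β+1) ht0 hup
  rw [show β+1-1 = β by ring] at h1
  have h2 := tangent_ge (p := β) hβ0.le hβ1.le htp.le hup
  have g1 : β * ((tauF β a + hhF β a)^(β-1) * hhF β a)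
      ≤ (tauF β a + hhF β a)^β - tauF β a ^β := by nlinarith [h2]
  -- h ≤ M * τ
  have τlb : ((1:ℝ)/2) ^ (1/β) ≤ tauF β a :=
    Real.rpow_le_rpow (by norm_num) (ratio_half hβ0 hβ1 ha) (by positivity)
  have τlbp : (0:ℝ) < ((1:ℝ)/2) ^ (1/β) := Real.rpow_pos_of_pos (by norm_num) _
  have step1 := Real.rpow_le_rpow_of_nonpos τlbp τlb (by linarith : -((β+1)/2) ≤ 0)
  have step2 : (((1:ℝ)/2) ^ (1/β)) ^ (-((β+1)/2)) = (2:ℝ) ^ ((β+1)/(2*β)) := by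
    rw [← Real.rpow_mul (by norm_num : (0:ℝ) ≤ 1/2),
      show (1/β) * -((β+1)/2) = -((β+1)/(2*β)) by rw [div_mul_eq_mul_div, one_mul, neg_div, div_div],
      one_div, Real.inv_rpow (by norm_num : (0:ℝ) ≤ 2),
      Real.rpow_neg (by norm_num : (0:ℝ) ≤ 2), inv_inv]
  have hle : hhF β a ≤ (2:ℝ) ^ ((β+1)/(2*β)) * tauF β a := by
    have e : hhF β a = tauF β a * tauF β a ^ (-((β+1)/2)) := by
      rw [hhF, show (1-β)/2 = 1 + -((β+1)/2) by ring, Real.rpow_add htp, Real.rpow_one]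
    rw [e]
    calc tauF β a * tauF β a ^ (-((β+1)/2))
        ≤ tauF β a * ((2:ℝ) ^ ((β+1)/(2*β))) := by
          apply mul_le_mul_of_nonneg_left _ htp.le
          rw [← step2]; exact step1
      _ = (2:ℝ) ^ ((β+1)/(2*β)) * tauF β a := by ring
  have q1 : tauF β a + hhF β a ≤ (1 + (2:ℝ) ^ ((β+1)/(2*β))) * tauF β a := by nlinarith [hle]
  have q2 := Real.rpow_le_rpow_of_nonpos hup q1 (by linarith : β-1 ≤ 0)
  have q3 : ((1 + (2:ℝ) ^ ((β+1)/(2*β))) * tauF β a) ^ (β-1)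
      = (1 + (2:ℝ) ^ ((β+1)/(2*β))) ^ (β-1) * tauF β a ^ (β-1) :=
    Real.mul_rpow (by positivity) htp.le
  have g2 : (1 + (2:ℝ) ^ ((β+1)/(2*β))) ^ (β-1) * tauF β a ^ (β-1)
      ≤ (tauF β a + hhF β a) ^ (β-1) := by rw [← q3]; exact q2
  have g3 := mul_le_mul_of_nonneg_left (mul_le_mul_of_nonneg_right g2 hhp.le) hβ0.le
  have g4 : β * ((1 + (2:ℝ) ^ ((β+1)/(2*β))) ^ (β-1) * tauF β a ^ (β-1) * hhF β a)
      ≤ (tauF β a + hhF β a)^β - tauF β a ^β := by linarith [g1, g3]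
  have g5 := mul_le_mul_of_nonneg_right g4 (by linarith : (0:ℝ) ≤ t - (tauF β a + hhF β a))
  have g5' := mul_le_mul_of_nonneg_left g5 (by linarith : (0:ℝ) ≤ 2*(β+1))
  have ae' : (β+1) * tauF β a ^ β * (t - (tauF β a + hhF β a))
      = a * (t - (tauF β a + hhF β a)) := by rw [a_eq hβ0 ha]
  have hmax := ff_max hβ0 ha (t := tauF β a + hhF β a) hup.le
  simp only [ffF] at hmax ⊢
  nlinarith [h1, g5', ae', hmax]

lemma ff_left {t : ℝ} (hl : 0 < tauF β a - hhF β a) (ht0 : 0 ≤ t)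
    (htl : t ≤ tauF β a - hhF β a) :
    ffF β a t ≤ ffF β a (tauF β a)
      - (2*(β+1)*β) * (tauF β a ^ (β-1) * hhF β a) * ((tauF β a - hhF β a) - t) := by
  have htp : 0 < tauF β a := tau_pos hβ0 ha
  have hhp : 0 < hhF β a := hh_pos hβ0 ha
  have h1 := tangent_le (p := β+1) (by linarith : (1:ℝ) ≤ β+1) ht0 hl
  rw [show β+1-1 = β by ring] at h1
  have h2 := tangent_ge (p := β) hβ0.le hβ1.le hl.le htp
  have g : β * (tauF β a ^ (β-1) * hhF β a) ≤ tauF β a ^β - (tauF β a - hhF β a)^β := by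
    nlinarith [h2]
  have g5 := mul_le_mul_of_nonneg_right g (by linarith : (0:ℝ) ≤ (tauF β a - hhF β a) - t)
  have g5' := mul_le_mul_of_nonneg_left g5 (by linarith : (0:ℝ) ≤ 2*(β+1))
  have ae' : (β+1) * tauF β a ^ β * (t - (tauF β a - hhF β a))
      = a * (t - (tauF β a - hhF β a)) := by rw [a_eq hβ0 ha]
  have hmax := ff_max hβ0 ha (t := tauF β a - hhF β a) hl.le
  simp only [ffF] at hmax ⊢
  nlinarith [h1, g5', ae', hmax]

end dev

noncomputable def kapF (β : ℝ) : ℝ := 2*(β+1)*β*(1 + (2:ℝ) ^ ((β+1)/(2*β))) ^ (β-1)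

section integrals
variable {β a : ℝ} (hβ0 : 0 < β) (hβ1 : β < 1) (ha : 1 ≤ a)
include hβ0 hβ1 ha

lemma kap_pos : 0 < kapF β := by
  have : (0:ℝ) < (1 + (2:ℝ) ^ ((β+1)/(2*β))) ^ (β-1) := by positivity
  unfold kapF; positivity

lemma ff_cont : Continuous fun t : ℝ => Real.exp (ffF β a t) := by
  have h1 : Continuous fun t : ℝ => t ^ (β+1) := Real.continuous_rpow_const (by linarith)
  have : Continuous (ffF β a) := by
    unfold ffF
    exact ((continuous_const.mul continuous_id).sub (continuous_const.mul h1))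
  exact Real.continuous_exp.comp this

lemma c1_mul_h : kapF β * (tauF β a ^ (β-1) * hhF β a) * hhF β a = kapF β := by
  calc kapF β * (tauF β a ^ (β-1) * hhF β a) * hhF β a
      = kapF β * (hhF β a * hhF β a * tauF β a ^ (β-1)) := by ring
    _ = kapF β := by rw [hh_sq hβ0 ha, mul_one]

lemma c1_pos : 0 < kapF β * (tauF β a ^ (β-1) * hhF β a) := by
  have h1 := kap_pos hβ0 hβ1 ha
  have h2 : (0:ℝ) < tauF β a ^ (β-1) := Real.rpow_pos_of_pos (tau_pos hβ0 ha) _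
  have h3 := hh_pos hβ0 ha
  positivity

lemma ff_exp_bound {t : ℝ} (ht : 0 < t) :
    Real.exp (ffF β a t) ≤
      Real.exp (ffF β a (tauF β a) + (kapF β * (tauF β a ^ (β-1) * hhF β a)) * (tauF β a + hhF β a))
        * Real.exp (-(kapF β * (tauF β a ^ (β-1) * hhF β a)) * t) := by
  set c1 := kapF β * (tauF β a ^ (β-1) * hhF β a) with hc1def
  have hc1 : 0 < c1 := c1_pos hβ0 hβ1 ha
  rw [← Real.exp_add]
  apply Real.exp_le_exp.2
  rcases le_or_gt t (tauF β a + hhF β a) with hc | hc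
  · have h1 := ff_max hβ0 ha ht.le
    nlinarith [h1, mul_le_mul_of_nonneg_left hc hc1.le]
  · have h1 := ff_tail hβ0 hβ1 ha hc.le
    rw [show 2*(β+1)*β*(1 + (2:ℝ) ^ ((β+1)/(2*β))) ^ (β-1) = kapF β from rfl, ← hc1def] at h1
    nlinarith [h1]

lemma ff_integrable : IntegrableOn (fun t => Real.exp (ffF β a t)) (Ioi (0:ℝ)) := by
  have hc1 : 0 < kapF β * (tauF β a ^ (β-1) * hhF β a) := c1_pos hβ0 hβ1 ha
  apply Integrable.mono'
      ((exp_neg_integrableOn_Ioi 0 hc1).const_mul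
        (Real.exp (ffF β a (tauF β a)
          + (kapF β * (tauF β a ^ (β-1) * hhF β a)) * (tauF β a + hhF β a))))
  · exact (ff_cont hβ0 hβ1 ha).aestronglyMeasurable.restrict
  · filter_upwards [ae_restrict_mem measurableSet_Ioi] with t ht
    rw [Real.norm_eq_abs, abs_of_pos (Real.exp_pos _)]
    exact ff_exp_bound hβ0 hβ1 ha ht

lemma J_lower :
    Real.exp (ffF β a (tauF β a)) * Real.exp (-(2*(β+1)*β)) * hhF β a
      ≤ ∫ t in Ioi (0:ℝ), Real.exp (ffF β a t) := by
  have htp := tau_pos hβ0 ha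
  have hhp := hh_pos hβ0 ha
  have hsub : Ioc (tauF β a) (tauF β a + hhF β a) ⊆ Ioi (0:ℝ) :=
    fun x hx => lt_trans htp hx.1
  have hIoc : IntegrableOn (fun t => Real.exp (ffF β a t))
      (Ioc (tauF β a) (tauF β a + hhF β a)) := (ff_integrable hβ0 hβ1 ha).mono_set hsub
  have h1 : Real.exp (ffF β a (tauF β a) - 2*(β+1)*β)
        * (volume (Ioc (tauF β a) (tauF β a + hhF β a))).toReal
      ≤ ∫ t in Ioc (tauF β a) (tauF β a + hhF β a), Real.exp (ffF β a t) := by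
    apply setIntegral_ge_of_const_le_real measurableSet_Ioc
    · rw [Real.volume_Ioc]; exact ENNReal.ofReal_ne_top
    · intro x hx
      apply Real.exp_le_exp.2
      have := ff_near hβ0 hβ1 ha (s := x - tauF β a) (by linarith [hx.1]) (by linarith [hx.2])
      rw [show tauF β a + (x - tauF β a) = x by ring] at this
      linarith
    · exact hIoc
  have h2 : (volume (Ioc (tauF β a) (tauF β a + hhF β a))).toReal = hhF β a := by
    rw [Real.volume_Ioc, ENNReal.toReal_ofReal (by linarith)]
    ring
  have h3 : ∫ t in Ioc (tauF β a) (tauF β a + hhF β a), Real.exp (ffF β a t)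
      ≤ ∫ t in Ioi (0:ℝ), Real.exp (ffF β a t) := by
    apply setIntegral_mono_set (ff_integrable hβ0 hβ1 ha)
      (Filter.Eventually.of_forall fun x => (Real.exp_pos _).le) hsub.eventuallyLE
  rw [h2] at h1
  calc Real.exp (ffF β a (tauF β a)) * Real.exp (-(2*(β+1)*β)) * hhF β a
      = Real.exp (ffF β a (tauF β a) - 2*(β+1)*β) * hhF β a := by
        rw [← Real.exp_add]; ring_nf
    _ ≤ _ := le_trans h1 h3

end integrals

lemma exp_tail_integral {b c : ℝ} (hc : 0 < c) :
    ∫ t in Ioi b, Real.exp (-c * t) = c⁻¹ * Real.exp (-(c*b)) := by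
  have h := integral_comp_mul_left_Ioi (fun u => Real.exp (-u)) b hc
  rw [integral_exp_neg_Ioi] at h
  simpa [neg_mul, smul_eq_mul] using h

section integrals2
variable {β a : ℝ} (hβ0 : 0 < β) (hβ1 : β < 1) (ha : 1 ≤ a)
include hβ0 hβ1 ha

lemma J_tail :
    ∫ t in Ioi (tauF β a + hhF β a), Real.exp (ffF β a t)
      ≤ Real.exp (ffF β a (tauF β a)) * (hhF β a / kapF β) := by
  have htp := tau_pos hβ0 ha
  have hhp := hh_pos hβ0 ha
  have hc1 : 0 < kapF β * (tauF β a ^ (β-1) * hhF β a) := c1_pos hβ0 hβ1 ha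
  have hch : kapF β * (tauF β a ^ (β-1) * hhF β a) * hhF β a = kapF β := c1_mul_h hβ0 hβ1 ha
  have hb : ∫ t in Ioi (tauF β a + hhF β a), Real.exp (ffF β a t)
      ≤ ∫ t in Ioi (tauF β a + hhF β a),
          Real.exp (ffF β a (tauF β a)
            + (kapF β * (tauF β a ^ (β-1) * hhF β a)) * (tauF β a + hhF β a))
          * Real.exp (-(kapF β * (tauF β a ^ (β-1) * hhF β a)) * t) := by
    apply setIntegral_mono_on
    · exact (ff_integrable hβ0 hβ1 ha).mono_set
        (fun x hx => lt_trans (by linarith : (0:ℝ) < tauF β a + hhF β a) hx)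
    · exact (exp_neg_integrableOn_Ioi _ hc1).const_mul _
    · exact measurableSet_Ioi
    · intro t htm
      exact ff_exp_bound hβ0 hβ1 ha (lt_trans (by linarith : (0:ℝ) < tauF β a + hhF β a) htm)
  have hval : ∫ t in Ioi (tauF β a + hhF β a),
          Real.exp (ffF β a (tauF β a)
            + (kapF β * (tauF β a ^ (β-1) * hhF β a)) * (tauF β a + hhF β a))
          * Real.exp (-(kapF β * (tauF β a ^ (β-1) * hhF β a)) * t)
      = Real.exp (ffF β a (tauF β a)) * (kapF β * (tauF β a ^ (β-1) * hhF β a))⁻¹ := by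
    rw [MeasureTheory.integral_const_mul, exp_tail_integral hc1, Real.exp_add, Real.exp_neg]
    field_simp
  have hinv : (kapF β * (tauF β a ^ (β-1) * hhF β a))⁻¹ = hhF β a / kapF β := by
    rw [eq_div_iff (kap_pos hβ0 hβ1 ha).ne', inv_mul_eq_div, div_eq_iff hc1.ne']
    linarith [hch]
  rw [hval, hinv] at hb
  exact hb

lemma J_mid :
    ∫ t in Ioc (max (tauF β a - hhF β a) 0) (tauF β a + hhF β a), Real.exp (ffF β a t)
      ≤ Real.exp (ffF β a (tauF β a)) * (2 * hhF β a) := by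
  have htp := tau_pos hβ0 ha
  have hhp := hh_pos hβ0 ha
  set l := max (tauF β a - hhF β a) 0 with hldef
  have hl0 : 0 ≤ l := le_max_right _ _
  have hlle : tauF β a - hhF β a ≤ l := le_max_left _ _
  have hlu : l ≤ tauF β a + hhF β a := max_le (by linarith) (by linarith)
  have h1 : ∫ t in Ioc l (tauF β a + hhF β a), Real.exp (ffF β a t)
      ≤ ∫ _t in Ioc l (tauF β a + hhF β a), Real.exp (ffF β a (tauF β a)) := by
    apply setIntegral_mono_on
    · exact (ff_integrable hβ0 hβ1 ha).mono_set
        (fun x hx => lt_of_le_of_lt hl0 hx.1)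
    · exact integrableOn_const (by rw [Real.volume_Ioc]; exact ENNReal.ofReal_ne_top)
    · exact measurableSet_Ioc
    · intro x hx
      exact Real.exp_le_exp.2 (ff_max hβ0 ha (le_of_lt (lt_of_le_of_lt hl0 hx.1)))
  rw [setIntegral_const, smul_eq_mul] at h1
  have h2 : (volume (Ioc l (tauF β a + hhF β a))).toReal ≤ 2 * hhF β a := by
    rw [Real.volume_Ioc, ENNReal.toReal_ofReal (by linarith)]
    linarith
  calc ∫ t in Ioc l (tauF β a + hhF β a), Real.exp (ffF β a t)
      ≤ (volume (Ioc l (tauF β a + hhF β a))).toReal * Real.exp (ffF β a (tauF β a)) := h1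
    _ ≤ 2 * hhF β a * Real.exp (ffF β a (tauF β a)) :=
        mul_le_mul_of_nonneg_right h2 (Real.exp_pos _).le
    _ = Real.exp (ffF β a (tauF β a)) * (2 * hhF β a) := by ring

lemma J_left :
    ∫ t in Ioc (0:ℝ) (max (tauF β a - hhF β a) 0), Real.exp (ffF β a t)
      ≤ Real.exp (ffF β a (tauF β a)) * (hhF β a / (2*(β+1)*β)) := by
  have htp := tau_pos hβ0 ha
  have hhp := hh_pos hβ0 ha
  have hτb : (0:ℝ) < tauF β a ^ (β-1) := Real.rpow_pos_of_pos htp _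
  set l := max (tauF β a - hhF β a) 0 with hldef
  rcases le_or_gt l 0 with h0 | h0
  · rw [show Ioc (0:ℝ) l = ∅ from Ioc_eq_empty (by simpa using h0)]
    simp only [Measure.restrict_empty, integral_zero_measure]
    positivity
  · have hlpos : 0 < tauF β a - hhF β a := by
      by_contra hcon
      push_neg at hcon
      rw [hldef, max_eq_right (by linarith)] at h0
      exact lt_irrefl _ h0
    have hl : l = tauF β a - hhF β a := max_eq_left (by linarith)
    set c2 := 2*(β+1)*β*(tauF β a ^ (β-1) * hhF β a) with hc2def
    have hc2 : 0 < c2 := by rw [hc2def]; positivity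
    have hch : c2 * hhF β a = 2*(β+1)*β := by
      rw [hc2def]
      calc 2*(β+1)*β*(tauF β a ^ (β-1) * hhF β a) * hhF β a
          = 2*(β+1)*β*(hhF β a * hhF β a * tauF β a ^ (β-1)) := by ring
        _ = 2*(β+1)*β := by rw [hh_sq hβ0 ha, mul_one]
    have h1 : ∫ t in Ioc (0:ℝ) l, Real.exp (ffF β a t)
        ≤ ∫ t in Ioc (0:ℝ) l,
            Real.exp (ffF β a (tauF β a)) * Real.exp (-c2 * (l - t)) := by
      apply setIntegral_mono_on
      · exact (ff_integrable hβ0 hβ1 ha).mono_set (fun x hx => hx.1)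
      · apply Continuous.integrableOn_Ioc
        exact continuous_const.mul
          (Real.continuous_exp.comp ((continuous_const.mul
            (continuous_const.sub continuous_id))))
      · exact measurableSet_Ioc
      · intro t htm
        rw [← Real.exp_add]
        apply Real.exp_le_exp.2
        have := ff_left hβ0 hβ1 ha hlpos htm.1.le (by rw [← hl]; exact htm.2)
        rw [← hl] at this
        rw [hc2def]
        nlinarith [this]
    have h2 : ∫ t in Ioc (0:ℝ) l,
          Real.exp (ffF β a (tauF β a)) * Real.exp (-c2 * (l - t))
        = Real.exp (ffF β a (tauF β a)) * ∫ t in Ioc (0:ℝ) l, Real.exp (-c2 * (l - t)) :=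
      MeasureTheory.integral_const_mul _ _
    have h3 : ∫ t in Ioc (0:ℝ) l, Real.exp (-c2 * (l - t)) ≤ c2⁻¹ := by
      rw [← intervalIntegral.integral_of_le h0.le]
      rw [intervalIntegral.integral_comp_sub_left (fun u => Real.exp (-c2 * u)) l]
      rw [sub_self, sub_zero]
      rw [intervalIntegral.integral_of_le h0.le]
      calc ∫ t in Ioc (0:ℝ) l, Real.exp (-c2 * t)
          ≤ ∫ t in Ioi (0:ℝ), Real.exp (-c2 * t) := by
            apply setIntegral_mono_set (exp_neg_integrableOn_Ioi 0 hc2)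
              (Filter.Eventually.of_forall fun x => (Real.exp_pos _).le)
              (HasSubset.Subset.eventuallyLE (fun x hx => hx.1))
        _ = c2⁻¹ := by rw [exp_tail_integral hc2, mul_zero, neg_zero, Real.exp_zero, mul_one]
    have h4 : c2⁻¹ = hhF β a / (2*(β+1)*β) := by
      rw [eq_div_iff (by positivity : (2*(β+1)*β) ≠ 0), inv_mul_eq_div, div_eq_iff hc2.ne']
      linarith [hch]
    calc ∫ t in Ioc (0:ℝ) l, Real.exp (ffF β a t)
        ≤ Real.exp (ffF β a (tauF β a)) * ∫ t in Ioc (0:ℝ) l, Real.exp (-c2 * (l - t)) := by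
          rw [← h2]; exact h1
      _ ≤ Real.exp (ffF β a (tauF β a)) * c2⁻¹ :=
          mul_le_mul_of_nonneg_left h3 (Real.exp_pos _).le
      _ = Real.exp (ffF β a (tauF β a)) * (hhF β a / (2*(β+1)*β)) := by rw [h4]

lemma J_upper :
    ∫ t in Ioi (0:ℝ), Real.exp (ffF β a t)
      ≤ Real.exp (ffF β a (tauF β a))
          * (hhF β a * (2 + 1/(2*(β+1)*β) + 1/(kapF β))) := by
  have htp := tau_pos hβ0 ha
  have hhp := hh_pos hβ0 ha
  set l := max (tauF β a - hhF β a) 0 with hldef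
  have hl0 : 0 ≤ l := le_max_right _ _
  have hlu : l ≤ tauF β a + hhF β a := max_le (by linarith) (by linarith)
  have hu0 : (0:ℝ) ≤ tauF β a + hhF β a := by linarith
  have hsub1 : Ioc (0:ℝ) l ⊆ Ioi 0 := fun x hx => hx.1
  have hsub2 : Ioc l (tauF β a + hhF β a) ⊆ Ioi (0:ℝ) := fun x hx => lt_of_le_of_lt hl0 hx.1
  have hsub3 : Ioi (tauF β a + hhF β a) ⊆ Ioi (0:ℝ) := fun x hx => lt_of_le_of_lt hu0 hx
  have hInt := ff_integrable hβ0 hβ1 ha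
  have e1 : ∫ t in Ioi (0:ℝ), Real.exp (ffF β a t)
      = ((∫ t in Ioc (0:ℝ) l, Real.exp (ffF β a t))
          + ∫ t in Ioc l (tauF β a + hhF β a), Real.exp (ffF β a t))
        + ∫ t in Ioi (tauF β a + hhF β a), Real.exp (ffF β a t) := by
    rw [← setIntegral_union (Set.Ioc_disjoint_Ioc_of_le le_rfl) measurableSet_Ioc
        (hInt.mono_set hsub1) (hInt.mono_set hsub2),
      Set.Ioc_union_Ioc_eq_Ioc hl0 hlu,
      ← setIntegral_union (Set.Ioc_disjoint_Ioi le_rfl) measurableSet_Ioi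
        (hInt.mono_set (fun x hx => hx.1)) (hInt.mono_set hsub3),
      Set.Ioc_union_Ioi_eq_Ioi hu0]
  rw [e1]
  have b1 := J_left hβ0 hβ1 ha
  have b2 := J_mid hβ0 hβ1 ha
  have b3 := J_tail hβ0 hβ1 ha
  rw [← hldef] at b1 b2
  have : Real.exp (ffF β a (tauF β a)) * (hhF β a / (2*(β+1)*β))
      + Real.exp (ffF β a (tauF β a)) * (2 * hhF β a)
      + Real.exp (ffF β a (tauF β a)) * (hhF β a / kapF β)
      = Real.exp (ffF β a (tauF β a))
          * (hhF β a * (2 + 1/(2*(β+1)*β) + 1/(kapF β))) := by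
    field_simp
    ring
  linarith [b1, b2, b3]

end integrals2


theorem moment_asymptotics (β : ℝ) (hβ0 : 0 < β) (hβ1 : β < 1) :
    ∃ c C : ℝ, 0 < c ∧ 0 < C ∧ ∀ n : ℕ,
      c * (((1 + n : ℝ) / (1 + β)) ^ ((1 - β) / (2 * β)) *
          Real.exp (2 * β * ((1 + n : ℝ) / (1 + β)) ^ ((1 + β) / β))) ≤ mom β n ∧
      mom β n ≤ C * (((1 + n : ℝ) / (1 + β)) ^ ((1 - β) / (2 * β)) *
          Real.exp (2 * β * ((1 + n : ℝ) / (1 + β)) ^ ((1 + β) / β))) := by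
  have hκ : 0 < kapF β := kap_pos hβ0 hβ1 (le_refl (1:ℝ))
  refine ⟨2*π*Real.exp (-(2*(β+1)*β)),
    2*π*((2:ℝ)^((1-β)/(2*β)) + 2 + 1/(2*(β+1)*β) + 1/(kapF β)), ?_, ?_, ?_⟩
  · positivity
  · have h2e : (0:ℝ) < (2:ℝ)^((1-β)/(2*β)) := Real.rpow_pos_of_pos (by norm_num) _
    positivity
  intro n
  set a : ℝ := 1 + (n:ℝ) with hadef
  have ha : 1 ≤ a := by rw [hadef]; linarith [Nat.cast_nonneg (α := ℝ) n]
  have htp := tau_pos hβ0 ha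
  have hhp := hh_pos hβ0 ha
  -- polar coordinates
  have hmom : mom β n = 2 * (π * ∫ r in Ioi (0:ℝ),
      r * (r ^ (2*n) * Real.exp (-2 * (max (Real.log r) 0) ^ (β+1)))) := by
    have key := MeasureTheory.integral_fun_norm_addHaar (volume : Measure ℂ)
      (fun r : ℝ => r ^ (2*n) * Real.exp (-2 * (max (Real.log r) 0) ^ (β+1)))
    rw [Complex.finrank_real_complex] at key
    have hball : volume.real (Metric.ball (0:ℂ) 1) = π := by
      rw [measureReal_def, Complex.volume_ball]
      simp
    rw [hball] at key
    simp only [pow_one, smul_eq_mul, nsmul_eq_mul, Nat.cast_ofNat] at key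
    unfold mom phi
    rw [key]
    norm_num
  set J := ∫ t in Ioi (0:ℝ), Real.exp (ffF β a t) with hJdef
  -- substitution r = exp t on (1, ∞)
  have himg : Real.exp '' Ioi (0:ℝ) = Ioi (1:ℝ) := by
    ext x
    constructor
    · rintro ⟨t, ht, rfl⟩
      exact Real.one_lt_exp_iff.2 ht
    · intro hx
      exact ⟨Real.log x, Real.log_pos hx, Real.exp_log (lt_trans one_pos hx)⟩
  have hderiv : ∀ x ∈ Ioi (0:ℝ), HasDerivWithinAt Real.exp (Real.exp x) (Ioi 0) x :=
    fun x _ => (Real.hasDerivAt_exp x).hasDerivWithinAt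
  have hinj : Set.InjOn Real.exp (Ioi 0) := Real.exp_injective.injOn
  have hEqOn : ∀ t ∈ Ioi (0:ℝ), |Real.exp t| • (fun r : ℝ =>
      r * (r ^ (2*n) * Real.exp (-2 * (max (Real.log r) 0) ^ (β+1)))) (Real.exp t)
      = Real.exp (ffF β a t) := by
    intro t ht
    simp only [smul_eq_mul]
    rw [abs_of_pos (Real.exp_pos t), Real.log_exp, max_eq_left (le_of_lt ht)]
    rw [← Real.exp_nat_mul, ← Real.exp_add, ← Real.exp_add, ← Real.exp_add]
    congr 1
    rw [ffF, hadef]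
    push_cast
    ring
  have hIoi1 : ∫ r in Ioi (1:ℝ),
      r * (r ^ (2*n) * Real.exp (-2 * (max (Real.log r) 0) ^ (β+1))) = J := by
    rw [← himg, integral_image_eq_integral_abs_deriv_smul measurableSet_Ioi hderiv hinj, hJdef]
    exact setIntegral_congr_fun measurableSet_Ioi (fun t ht => hEqOn t ht)
  have hIntIoi1 : IntegrableOn (fun r : ℝ =>
      r * (r ^ (2*n) * Real.exp (-2 * (max (Real.log r) 0) ^ (β+1)))) (Ioi 1) := by
    rw [← himg, integrableOn_image_iff_integrableOn_abs_deriv_smul measurableSet_Ioi hderiv hinj]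
    exact (ff_integrable hβ0 hβ1 ha).congr_fun (fun t ht => (hEqOn t ht).symm) measurableSet_Ioi
  -- the piece on (0, 1]
  have hEq01 : Set.EqOn (fun r : ℝ =>
      r * (r ^ (2*n) * Real.exp (-2 * (max (Real.log r) 0) ^ (β+1))))
      (fun r : ℝ => r ^ (2*n+1)) (Ioc (0:ℝ) 1) := by
    intro r hr
    simp only
    rw [max_eq_right (Real.log_nonpos hr.1.le hr.2),
      Real.zero_rpow (by positivity : β+1 ≠ 0), mul_zero, Real.exp_zero, mul_one, pow_succ]
    ring
  have hInt01 : IntegrableOn (fun r : ℝ =>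
      r * (r ^ (2*n) * Real.exp (-2 * (max (Real.log r) 0) ^ (β+1)))) (Ioc (0:ℝ) 1) :=
    ((continuous_pow (2*n+1)).integrableOn_Ioc).congr_fun hEq01.symm measurableSet_Ioc
  have hval01 : ∫ r in Ioc (0:ℝ) 1,
      r * (r ^ (2*n) * Real.exp (-2 * (max (Real.log r) 0) ^ (β+1))) = 1/(2*(n:ℝ)+2) := by
    rw [setIntegral_congr_fun measurableSet_Ioc hEq01,
      ← intervalIntegral.integral_of_le zero_le_one, integral_pow]
    norm_num
    ring
  have hrad : ∫ r in Ioi (0:ℝ),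
      r * (r ^ (2*n) * Real.exp (-2 * (max (Real.log r) 0) ^ (β+1))) = 1/(2*(n:ℝ)+2) + J := by
    rw [← Set.Ioc_union_Ioi_eq_Ioi zero_le_one,
      setIntegral_union (Set.Ioc_disjoint_Ioi le_rfl) measurableSet_Ioi hInt01 hIntIoi1,
      hval01, hIoi1]
  have hmom2 : mom β n = 2*π*(1/(2*(n:ℝ)+2)) + 2*π*J := by
    rw [hmom, hrad]; ring
  -- identification of the comparison quantities
  have hH : ((1 + (n:ℝ)) / (1 + β)) ^ ((1-β)/(2*β)) = hhF β a := by
    rw [hh_eq hβ0 ha, add_comm 1 β]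
  have hE : Real.exp (2 * β * ((1 + (n:ℝ)) / (1 + β)) ^ ((1+β)/β))
      = Real.exp (ffF β a (tauF β a)) := by
    rw [ff_tau hβ0 ha, add_comm 1 β]
  rw [hH, hE]
  have hπ : (0:ℝ) < π := Real.pi_pos
  have hn0 : (0:ℝ) ≤ (n:ℝ) := Nat.cast_nonneg n
  constructor
  · -- lower bound
    have b := J_lower hβ0 hβ1 ha
    have b' := mul_le_mul_of_nonneg_left b (by positivity : (0:ℝ) ≤ 2*π)
    have hnn : 0 ≤ 2*π*(1/(2*(n:ℝ)+2)) := by positivity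
    rw [hmom2]
    nlinarith [b', hnn]
  · -- upper bound
    have b := J_upper hβ0 hβ1 ha
    have b' := mul_le_mul_of_nonneg_left b (by positivity : (0:ℝ) ≤ 2*π)
    have hlb : ((1:ℝ)/2) ^ ((1-β)/(2*β)) ≤ hhF β a := by
      rw [hh_eq hβ0 ha]
      exact Real.rpow_le_rpow (by norm_num) (ratio_half hβ0 hβ1 ha) (div_nonneg (by linarith) (by linarith))
    have hmul : ((1:ℝ)/2) ^ ((1-β)/(2*β)) * (2:ℝ) ^ ((1-β)/(2*β)) = 1 := by
      rw [← Real.mul_rpow (by norm_num) (by norm_num)]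
      norm_num
    have h2e : (0:ℝ) < (2:ℝ)^((1-β)/(2*β)) := Real.rpow_pos_of_pos (by norm_num) _
    have hE1 : (1:ℝ) ≤ Real.exp (ffF β a (tauF β a)) := by
      rw [← Real.exp_zero]
      exact Real.exp_le_exp.2 (ff_tau_nonneg hβ0 ha)
    have hfrac : 1/(2*(n:ℝ)+2) ≤ 1 := by
      rw [div_le_one (by linarith)]
      linarith
    have hone : (1:ℝ) ≤ (2:ℝ)^((1-β)/(2*β)) * hhF β a * Real.exp (ffF β a (tauF β a)) := by
      nlinarith [mul_le_mul_of_nonneg_left hlb h2e.le, hE1, hmul,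
        mul_pos h2e hhp]
    rw [hmom2]
    nlinarith [b', hfrac, hone, hπ]
end

section
/- Let 0<β<1, and for integers n,k≥0 with k≠n define c(n,k) = (n−k)·((1+n)/(1+β))^{1/β} + β·[((1+k)/(1+β))^{(1+β)/β} − ((1+n)/(1+β))^{(1+β)/β}]. Then c(n,k) ≥ (1+β)^{-(1+β)/β} · |k−n|² · (1+n)^{1/β − 1}. -/
private lemma bernoulli_key (q t : ℝ) (hq : 2 ≤ q) (ht : 0 ≤ t) :
    t * (1 + (q - 1) * (t - 1)) ≤ t ^ q := by
  rcases eq_or_lt_of_le ht with h | h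
  · rw [← h, Real.zero_rpow (by linarith : q ≠ 0)]
    linarith
  · have hb := one_add_mul_self_le_rpow_one_add (by linarith : (-1:ℝ) ≤ t - 1)
      (by linarith : (1:ℝ) ≤ q - 1)
    have h2 : (1 + (t - 1)) = t := by ring
    rw [h2] at hb
    calc t * (1 + (q - 1) * (t - 1)) ≤ t * t ^ (q - 1) :=
          mul_le_mul_of_nonneg_left hb ht
      _ = t ^ (1 + (q - 1)) := by
          rw [Real.rpow_add h, Real.rpow_one]
      _ = t ^ q := by ring_nf

private lemma key_ineq (a b q : ℝ) (ha : 0 < a) (hb : 0 ≤ b) (hq : 2 ≤ q) :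
    (q - 1) * (b - a) ^ 2 * a ^ (q - 2) ≤ b ^ q - a ^ q - q * (b - a) * a ^ (q - 1) := by
  have ht : (0:ℝ) ≤ b / a := by positivity
  have h1 := bernoulli_key q (b / a) hq ht
  have h2 : ((b / a) : ℝ) ^ q = b ^ q / a ^ q := Real.div_rpow hb ha.le q
  rw [h2] at h1
  have hA : 0 < a ^ (q - 2) := Real.rpow_pos_of_pos ha _
  have haq1 : a ^ (q - 1) = a ^ (q - 2) * a := by
    rw [← Real.rpow_add_one ha.ne' (q - 2)]; ring_nf
  have haq : a ^ q = a ^ (q - 2) * a * a := by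
    rw [← haq1, ← Real.rpow_add_one ha.ne' (q - 1)]; ring_nf
  have h3 : a ^ q * (b / a * (1 + (q - 1) * (b / a - 1))) ≤ b ^ q := by
    calc a ^ q * (b / a * (1 + (q - 1) * (b / a - 1)))
        ≤ a ^ q * (b ^ q / a ^ q) :=
          mul_le_mul_of_nonneg_left h1 (Real.rpow_pos_of_pos ha q).le
      _ = b ^ q := by field_simp
  have h4 : a ^ (q - 2) * (b * a) + (q - 1) * (a ^ (q - 2) * (b * (b - a))) ≤ b ^ q := by
    have heq : a ^ q * (b / a * (1 + (q - 1) * (b / a - 1)))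
        = a ^ (q - 2) * (b * a) + (q - 1) * (a ^ (q - 2) * (b * (b - a))) := by
      rw [haq]; field_simp
    linarith [heq ▸ h3]
  rw [haq, haq1]
  nlinarith [h4]

theorem gap_lower_bound (β : ℝ) (hβ0 : 0 < β) (hβ1 : β < 1) (n k : ℕ) (hnk : k ≠ n) :
    ((n : ℝ) - k) * ((1 + n : ℝ) / (1 + β)) ^ (1 / β) +
        β * (((1 + k : ℝ) / (1 + β)) ^ ((1 + β) / β) - ((1 + n : ℝ) / (1 + β)) ^ ((1 + β) / β))
      ≥ (1 + β) ^ (-(1 + β) / β) * |(k : ℝ) - n| ^ 2 * (1 + n : ℝ) ^ (1 / β - 1) := by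
  set a : ℝ := 1 + n with ha_def
  set b : ℝ := 1 + k with hb_def
  set c : ℝ := 1 + β with hc_def
  set q : ℝ := c / β with hq_def
  have ha : 0 < a := by positivity
  have hb : (0:ℝ) ≤ b := by positivity
  have hc : 0 < c := by positivity
  have hq2 : 2 ≤ q := by
    rw [hq_def, le_div_iff₀ hβ0, hc_def]; linarith
  have h1β : 1 / β = q - 1 := by
    rw [hq_def, hc_def]; field_simp; ring
  have h1β2 : 1 / β - 1 = q - 2 := by rw [h1β]; ring
  have hnegq : -c / β = -q := by rw [hq_def]; ring
  have hkey := key_ineq a b q ha hb hq2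
  -- rewrite goal
  have hab : (n : ℝ) - k = a - b := by rw [ha_def, hb_def]; ring
  have habs : |(k : ℝ) - n| ^ 2 = (b - a) ^ 2 := by
    rw [sq_abs]; rw [ha_def, hb_def]; ring
  rw [hab, habs, h1β2, h1β, hnegq]
  have e1 : (a / c) ^ (q - 1) = a ^ (q - 1) / c ^ (q - 1) := Real.div_rpow ha.le hc.le _
  have e2 : (b / c) ^ q = b ^ q / c ^ q := Real.div_rpow hb hc.le _
  have e3 : (a / c) ^ q = a ^ q / c ^ q := Real.div_rpow ha.le hc.le _
  have e4 : c ^ (-q) = (c ^ q)⁻¹ := Real.rpow_neg hc.le q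
  rw [e1, e2, e3, e4]
  have hcq : 0 < c ^ q := Real.rpow_pos_of_pos hc q
  have hcq1 : 0 < c ^ (q - 1) := Real.rpow_pos_of_pos hc _
  have hcc : c ^ q = c ^ (q - 1) * c := by
    rw [← Real.rpow_add_one hc.ne' (q - 1)]; ring_nf
  have hβq : β * q = c := by
    rw [hq_def]; field_simp
  have hβq1 : β * (q - 1) = 1 := by
    rw [hq_def, hc_def]; field_simp; ring
  -- multiply key by β
  have hkey2 : (b - a) ^ 2 * a ^ (q - 2)
      ≤ β * (b ^ q - a ^ q) - c * (b - a) * a ^ (q - 1) := by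
    have h5 := mul_le_mul_of_nonneg_left hkey hβ0.le
    have e5 : β * ((q - 1) * (b - a) ^ 2 * a ^ (q - 2)) = (b - a) ^ 2 * a ^ (q - 2) := by
      rw [show β * ((q - 1) * (b - a) ^ 2 * a ^ (q - 2))
          = β * (q - 1) * ((b - a) ^ 2 * a ^ (q - 2)) from by ring, hβq1, one_mul]
    have e6 : β * (b ^ q - a ^ q - q * (b - a) * a ^ (q - 1))
        = β * (b ^ q - a ^ q) - c * (b - a) * a ^ (q - 1) := by
      rw [show β * (b ^ q - a ^ q - q * (b - a) * a ^ (q - 1))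
          = β * (b ^ q - a ^ q) - β * q * ((b - a) * a ^ (q - 1)) from by ring, hβq]
      ring
    rw [e5, e6] at h5
    exact h5
  rw [ge_iff_le, ← sub_nonneg]
  have expand : (a - b) * (a ^ (q - 1) / c ^ (q - 1)) + β * (b ^ q / c ^ q - a ^ q / c ^ q)
      - (c ^ q)⁻¹ * (b - a) ^ 2 * a ^ (q - 2)
      = (β * (b ^ q - a ^ q) - c * (b - a) * a ^ (q - 1) - (b - a) ^ 2 * a ^ (q - 2)) / c ^ q := by
    rw [hcc]; field_simp; ring
  rw [expand]
  apply div_nonneg _ hcq.le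
  linarith
end

section
/- For 0<β<1, the double series ∑_{n=0}^∞ ∑_{k≠n} ((1+n)/(1+k))^{(1-β)/(2β)} · exp(−2(1+β)^{-(1+β)/β} |k−n|² (1+n)^{1/β−1}) converges. -/
open Real

lemma pow_div_fact_le_exp (x : ℝ) (hx : 0 ≤ x) (M : ℕ) :
    x ^ M / (Nat.factorial M : ℝ) ≤ Real.exp x := by
  have h := Real.sum_le_exp_of_nonneg hx (M + 1)
  refine le_trans ?_ h
  have hnn : ∀ i ∈ Finset.range (M + 1), (0:ℝ) ≤ x ^ i / (Nat.factorial i : ℝ) := by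
    intro i _; positivity
  simpa using Finset.single_le_sum hnn (Finset.self_mem_range_succ M)

theorem double_series_converges (β : ℝ) (hβ0 : 0 < β) (hβ1 : β < 1) :
    Summable (fun p : ℕ × ℕ =>
      if p.2 = p.1 then (0 : ℝ)
      else ((1 + p.1 : ℝ) / (1 + p.2)) ^ ((1 - β) / (2 * β)) *
        Real.exp (-2 * (1 + β) ^ (-(1 + β) / β) * |(p.2 : ℝ) - p.1| ^ 2 *
          (1 + p.1 : ℝ) ^ (1 / β - 1))) := by
  set α := (1 - β) / (2 * β) with hαdef
  set γ := 1 / β - 1 with hγdef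
  have hα : 0 < α := div_pos (by linarith) (by linarith)
  have hγ : 0 < γ := by
    have h1 : 1 < 1 / β := one_lt_one_div hβ0 hβ1
    simp only [hγdef]; linarith
  set c : ℝ := 2 * (1 + β) ^ (-(1 + β) / β) with hcdef
  have hc : 0 < c := by
    have : (0:ℝ) < (1 + β) ^ (-(1 + β) / β) := Real.rpow_pos_of_pos (by linarith) _
    rw [hcdef]; linarith
  set M : ℕ := ⌈(α + 2) / γ⌉₊ with hMdef
  have hM : α + 2 ≤ γ * M := by
    have h := Nat.le_ceil ((α + 2) / γ)
    rw [div_le_iff₀ hγ] at h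
    calc α + 2 ≤ (M:ℝ) * γ := h
      _ = γ * M := by ring
  set G : ℕ → ℝ := fun n => (1 + n : ℝ) ^ α * Real.exp (-(c/2) * (1 + n : ℝ) ^ γ) with hGdef
  set H : ℤ → ℝ := fun j => Real.exp (-(c/2) * |(j:ℝ)|) with hHdef
  have hGnn : ∀ n, 0 ≤ G n := fun n => by
    simp only [hGdef]; positivity
  have hHnn : ∀ j, 0 ≤ H j := fun j => (Real.exp_pos _).le
  -- Summability of G
  have hG : Summable G := by
    set K : ℝ := (Nat.factorial M : ℝ) * (2 / c) ^ M with hKdef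
    have hKpos : 0 < K := by rw [hKdef]; positivity
    have hbound : ∀ n : ℕ, G n ≤ K * ((n:ℝ) + 1) ^ (-2 : ℝ) := by
      intro n
      have hb : (1:ℝ) ≤ 1 + n := by
        have : (0:ℝ) ≤ n := Nat.cast_nonneg n
        linarith
      have hbpos : (0:ℝ) < 1 + n := by linarith
      have hY : (0:ℝ) < (1 + n : ℝ) ^ γ := Real.rpow_pos_of_pos hbpos _
      have h1 : ((c/2) * (1 + n : ℝ) ^ γ) ^ M / (Nat.factorial M : ℝ)
          ≤ Real.exp ((c/2) * (1 + n : ℝ) ^ γ) :=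
        pow_div_fact_le_exp _ (by positivity) M
      have hXpos : (0:ℝ) < ((c/2) * (1 + n : ℝ) ^ γ) ^ M := by positivity
      have hfac : (0:ℝ) < (Nat.factorial M : ℝ) := by
        exact_mod_cast Nat.factorial_pos M
      have h2 : Real.exp (-(c/2) * (1 + n : ℝ) ^ γ)
          ≤ (Nat.factorial M : ℝ) / ((c/2) * (1 + n : ℝ) ^ γ) ^ M := by
        rw [neg_mul, Real.exp_neg, le_div_iff₀ hXpos, inv_mul_le_iff₀ (Real.exp_pos _)]
        calc ((c/2) * (1 + n : ℝ) ^ γ) ^ M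
            = ((c/2) * (1 + n : ℝ) ^ γ) ^ M / (Nat.factorial M : ℝ) * (Nat.factorial M : ℝ) := by
              field_simp
          _ ≤ Real.exp ((c/2) * (1 + n : ℝ) ^ γ) * (Nat.factorial M : ℝ) :=
              mul_le_mul_of_nonneg_right h1 hfac.le
      have hc0 : c ≠ 0 := hc.ne'
      have hge : (1 + n : ℝ) ^ α * ((Nat.factorial M : ℝ) / ((c/2) * (1 + n : ℝ) ^ γ) ^ M)
          = K * (1 + n : ℝ) ^ (α - γ * M) := by
        rw [mul_pow, ← Real.rpow_natCast ((1 + n : ℝ) ^ γ) M, ← Real.rpow_mul hbpos.le,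
          Real.rpow_sub hbpos, hKdef]
        have hB : (1 + n : ℝ) ^ (γ * (M:ℝ)) ≠ 0 := (Real.rpow_pos_of_pos hbpos _).ne'
        field_simp
        ring_nf
        rw [← mul_pow, ← mul_pow, ← mul_pow, mul_inv_cancel₀ hc0]
        norm_num
      calc G n = (1 + n : ℝ) ^ α * Real.exp (-(c/2) * (1 + n : ℝ) ^ γ) := rfl
        _ ≤ (1 + n : ℝ) ^ α * ((Nat.factorial M : ℝ) / ((c/2) * (1 + n : ℝ) ^ γ) ^ M) :=
            mul_le_mul_of_nonneg_left h2 (Real.rpow_nonneg hbpos.le _)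
        _ = K * (1 + n : ℝ) ^ (α - γ * M) := hge
        _ ≤ K * (1 + n : ℝ) ^ (-2 : ℝ) :=
            mul_le_mul_of_nonneg_left
              (Real.rpow_le_rpow_of_exponent_le hb (by linarith)) hKpos.le
        _ = K * ((n:ℝ) + 1) ^ (-2 : ℝ) := by rw [add_comm 1 (n:ℝ)]
    apply Summable.of_nonneg_of_le hGnn hbound
    apply Summable.mul_left
    have h0 : Summable (fun n : ℕ => (n:ℝ) ^ (-2:ℝ)) := Real.summable_nat_rpow.mpr (by norm_num)
    have := (summable_nat_add_iff 1).mpr h0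
    simpa using this
  -- Summability of H
  have hH : Summable H := by
    have hr : Real.exp (-(c/2)) < 1 := Real.exp_lt_one_iff.mpr (by linarith)
    have hnat : Summable (fun n : ℕ => Real.exp (-(c/2) * n)) := by
      have := summable_geometric_of_lt_one (Real.exp_pos (-(c/2))).le hr
      refine this.congr fun n => ?_
      rw [← Real.exp_nat_mul, mul_comm]
    apply Summable.of_nat_of_neg
    · refine hnat.congr fun n => ?_
      simp [hHdef]
    · refine hnat.congr fun n => ?_
      simp [hHdef]
  -- Product summability and pullback
  have hGH : Summable (fun q : ℕ × ℤ => G q.1 * H q.2) :=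
    hG.mul_of_nonneg hH hGnn hHnn
  have hinj : Function.Injective (fun p : ℕ × ℕ => ((p.1, (p.2:ℤ) - p.1) : ℕ × ℤ)) := by
    intro p q h
    simp only [Prod.mk.injEq] at h
    obtain ⟨h1, h2⟩ := h
    ext
    · exact h1
    · omega
  have hcomp : Summable ((fun q : ℕ × ℤ => G q.1 * H q.2) ∘
      (fun p : ℕ × ℕ => ((p.1, (p.2:ℤ) - p.1) : ℕ × ℤ))) :=
    hGH.comp_injective hinj
  -- Final comparison
  apply Summable.of_nonneg_of_le ?_ ?_ hcomp
  · intro p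
    split
    · exact le_rfl
    · positivity
  · rintro ⟨n, k⟩
    dsimp only [Function.comp]
    split
    · exact mul_nonneg (hGnn n) (hHnn _)
    · rename_i hk
      have hb : (1:ℝ) ≤ 1 + n := by
        have : (0:ℝ) ≤ n := Nat.cast_nonneg n
        linarith
      have hbpos : (0:ℝ) < 1 + n := by linarith
      have hkpos : (0:ℝ) < 1 + k := by
        have : (0:ℝ) ≤ k := Nat.cast_nonneg k
        linarith
      have hY : (1:ℝ) ≤ (1 + n : ℝ) ^ γ := Real.one_le_rpow hb hγ.le
      have hd : (1:ℝ) ≤ |(k:ℝ) - n| := by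
        have hne : (k:ℤ) ≠ (n:ℤ) := by exact_mod_cast hk
        have h1 : 1 ≤ |(k:ℤ) - (n:ℤ)| := Int.one_le_abs (sub_ne_zero.mpr hne)
        have h2 : ((|(k:ℤ) - (n:ℤ)| : ℤ) : ℝ) = |(k:ℝ) - n| := by
          push_cast [Int.cast_abs]
          ring_nf
        rw [← h2]
        exact_mod_cast h1
      have habs : |(((k:ℤ) - n : ℤ) : ℝ)| = |(k:ℝ) - n| := by push_cast; ring_nf
      have h1 : ((1 + n : ℝ) / (1 + k)) ^ α ≤ (1 + n : ℝ) ^ α := by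
        apply Real.rpow_le_rpow (by positivity) ?_ hα.le
        exact div_le_self hbpos.le (by linarith)
      have h2 : Real.exp (-2 * (1 + β) ^ (-(1 + β) / β) * |(k:ℝ) - n| ^ 2 * (1 + n : ℝ) ^ γ)
          ≤ Real.exp (-(c/2) * (1 + n : ℝ) ^ γ) * Real.exp (-(c/2) * |(k:ℝ) - n|) := by
        rw [← Real.exp_add]
        apply Real.exp_le_exp.mpr
        have hceq : -2 * (1 + β) ^ (-(1 + β) / β) = -c := by rw [hcdef]; ring
        rw [hceq]
        set d := |(k:ℝ) - n| with hddef
        set Y := (1 + n : ℝ) ^ γ with hYdef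
        have hd2 : (1:ℝ) ≤ d ^ 2 := by nlinarith
        have h3 : Y ≤ d ^ 2 * Y := le_mul_of_one_le_left (by linarith) hd2
        have h4 : d ≤ d ^ 2 * Y := by nlinarith
        have h5 : c * (Y + d) ≤ c * (2 * (d ^ 2 * Y)) :=
          mul_le_mul_of_nonneg_left (by linarith) hc.le
        linarith
      calc ((1 + n : ℝ) / (1 + k)) ^ α *
            Real.exp (-2 * (1 + β) ^ (-(1 + β) / β) * |(k:ℝ) - n| ^ 2 * (1 + n : ℝ) ^ γ)
          ≤ (1 + n : ℝ) ^ α * (Real.exp (-(c/2) * (1 + n : ℝ) ^ γ) * Real.exp (-(c/2) * |(k:ℝ) - n|)) := by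
            apply mul_le_mul h1 h2 (Real.exp_pos _).le (by positivity)
        _ = G n * H ((k:ℤ) - n) := by
            simp only [hGdef, hHdef, habs]
            ring
end

section
/- Let 0<β<1 and let Γ={γ_n : n≥0} with |γ_n| = exp(((1+n)/(1+β))^{1/β}) e^{δ_n} where (δ_n/(1+n)^{1/β−1}) is bounded. Then for any real α, the integral ∫_ℂ dist(z,Γ)²/(1+|z|)^{3+α} dm(z) is finite if and only if α > 1. -/
open MeasureTheory Metric Set


lemma gamma_large (β B : ℝ) (hβ0 : 0 < β) (hβ1 : β < 1)
    (γ : ℕ → ℂ) (δ : ℕ → ℝ)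
    (hmod : ∀ n : ℕ, ‖γ n‖ =
      Real.exp (((1 + n : ℝ) / (1 + β)) ^ (1 / β) + δ n))
    (hB : ∀ n : ℕ, |δ n| ≤ B * (1 + n : ℝ) ^ (1 / β - 1)) :
    ∀ k n : ℕ, ⌈6 * B⌉₊ + 6 * k + 13 ≤ n → 4 * Real.exp k < ‖γ n‖ := by
  intro k n hn
  set x : ℝ := (1 + n : ℝ) with hx
  have hx1 : (1:ℝ) ≤ x := le_add_of_nonneg_right (Nat.cast_nonneg n)
  have hx0 : (0:ℝ) < x := by linarith
  have hβ' : (0:ℝ) < 1 + β := by linarith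
  have hinv : (1:ℝ) ≤ 1 / β := by
    rw [le_div_iff₀ hβ0]; linarith
  -- 6B ≤ x
  have h6B : 6 * B ≤ x := by
    calc 6 * B ≤ (⌈6 * B⌉₊ : ℝ) := Nat.le_ceil _
    _ ≤ (n : ℝ) := by
        have : ⌈6 * B⌉₊ ≤ n := by omega
        exact_mod_cast this
    _ ≤ x := by rw [hx]; linarith
  -- (1+β)^(1/β) ≤ 3
  have e2 : (1 + β) ^ (1 / β) ≤ 3 := by
    rw [Real.rpow_def_of_pos hβ']
    have hlog : Real.log (1 + β) ≤ β := by
      have := Real.log_le_sub_one_of_pos hβ'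
      linarith
    have : Real.log (1 + β) * (1 / β) ≤ 1 := by
      rw [mul_one_div, div_le_one hβ0]
      exact hlog
    calc Real.exp (Real.log (1 + β) * (1 / β)) ≤ Real.exp 1 := Real.exp_le_exp.2 this
    _ ≤ 3 := by
        have := Real.exp_one_lt_d9
        linarith
  have e2' : (0:ℝ) < (1 + β) ^ (1 / β) := Real.rpow_pos_of_pos hβ' _
  -- main exponent lower bound
  have hxr : (0:ℝ) < x ^ (1 / β) := Real.rpow_pos_of_pos hx0 _
  have hxge : x ≤ x ^ (1 / β) := by
    nth_rewrite 1 [← Real.rpow_one x]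
    exact Real.rpow_le_rpow_of_exponent_le hx1 hinv
  have e1 : (x / (1 + β)) ^ (1 / β) = x ^ (1 / β) / (1 + β) ^ (1 / β) :=
    Real.div_rpow hx0.le hβ'.le _
  have e3 : x ^ (1 / β - 1) = x ^ (1 / β) / x := by
    rw [Real.rpow_sub hx0, Real.rpow_one]
  have hδn : -(B * (x ^ (1 / β) / x)) ≤ δ n := by
    have := (abs_le.1 (hB n)).1
    rw [← e3]
    exact this
  have hmain : x / 6 ≤ (x / (1 + β)) ^ (1 / β) + δ n := by
    have h1 : x ^ (1 / β) / 3 ≤ (x / (1 + β)) ^ (1 / β) := by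
      rw [e1]
      gcongr
    have h2 : B * (x ^ (1 / β) / x) ≤ x ^ (1 / β) / 6 := by
      rw [mul_div_assoc']
      rw [div_le_div_iff₀ hx0 (by norm_num : (0:ℝ) < 6)]
      nlinarith [hxr]
    have h3 : x ^ (1 / β) / 3 - x ^ (1 / β) / 6 = x ^ (1 / β) / 6 := by ring
    nlinarith
  -- x/6 > k + log 4
  have hlog4 : Real.log 4 < 2 := by
    rw [Real.log_lt_iff_lt_exp (by norm_num)]
    have h := Real.exp_one_gt_d9
    have : Real.exp 2 = Real.exp 1 * Real.exp 1 := by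
      rw [← Real.exp_add]; norm_num
    nlinarith
  have hxk : (k : ℝ) + Real.log 4 < x / 6 := by
    have : (n : ℝ) ≥ (6 * k + 13 : ℕ) := by
      have : 6 * k + 13 ≤ n := by omega
      exact_mod_cast this
    push_cast at this
    rw [hx]
    nlinarith
  have : Real.exp ((k : ℝ) + Real.log 4) < Real.exp ((x / (1 + β)) ^ (1 / β) + δ n) :=
    Real.exp_lt_exp.2 (by linarith)
  rw [Real.exp_add, Real.exp_log (by norm_num : (0:ℝ) < 4)] at this
  rw [hmod n]
  calc 4 * Real.exp k = Real.exp k * 4 := by ring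
  _ < Real.exp (((1 + n : ℝ) / (1 + β)) ^ (1 / β) + δ n) := by rw [hx] at this; exact this


lemma le_infDist_of_forall {x : ℂ} {s : Set ℂ} (hs : s.Nonempty) {b : ℝ} (hb : 0 ≤ b)
    (h : ∀ y ∈ s, b ≤ dist x y) : b ≤ Metric.infDist x s := by
  have h1 : ENNReal.ofReal b ≤ Metric.infEDist x s := by
    rw [Metric.le_infEDist]
    intro y hy
    rw [edist_dist]
    exact ENNReal.ofReal_le_ofReal (h y hy)
  have := ENNReal.toReal_mono (Metric.infEdist_ne_top hs) h1
  rwa [ENNReal.toReal_ofReal hb] at this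

lemma ofReal_sq_pi (x : ℝ) (hx : 0 ≤ x) :
    (ENNReal.ofReal x) ^ 2 * (NNReal.pi : ENNReal) = ENNReal.ofReal (x ^ 2 * Real.pi) := by
  rw [ENNReal.ofReal_mul (by positivity), ENNReal.ofReal_pow hx]
  congr 1
  rw [← NNReal.coe_real_pi, ENNReal.ofReal_coe_nnreal]

lemma not_integrable_one (β : ℝ) (hβ0 : 0 < β) (hβ1 : β < 1)
    (γ : ℕ → ℂ) (δ : ℕ → ℝ)
    (hmod : ∀ n : ℕ, ‖γ n‖ =
      Real.exp (((1 + n : ℝ) / (1 + β)) ^ (1 / β) + δ n))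
    (hδ : ∃ B : ℝ, ∀ n : ℕ, |δ n| ≤ B * (1 + n : ℝ) ^ (1 / β - 1)) :
    ¬ Integrable (fun z : ℂ =>
        (Metric.infDist z (Set.range γ)) ^ 2 / (1 + ‖z‖) ^ (3 + (1:ℝ))) := by
  intro hInt
  obtain ⟨B, hB⟩ := hδ
  have hout := gamma_large β B hβ0 hβ1 γ δ hmod hB
  set f : ℂ → ℝ := fun z =>
    (Metric.infDist z (Set.range γ)) ^ 2 / (1 + ‖z‖) ^ (3 + (1:ℝ)) with hf
  have hbase : ∀ z : ℂ, (0:ℝ) < 1 + ‖z‖ := fun z => by positivity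
  have hfnn : ∀ z : ℂ, 0 ≤ f z := by
    intro z
    have := Real.rpow_pos_of_pos (hbase z) (3 + (1:ℝ))
    rw [hf]
    positivity
  set M : ℕ := ⌈6 * B⌉₊ with hM
  set N : ℕ → ℕ := fun k => M + 6 * k + 13 with hN
  set r : ℕ → ℝ := fun k => Real.exp k with hrdef
  set s : ℕ → ℝ := fun k => r k / Real.sqrt (N k) with hsdef
  have hr0 : ∀ k, (0:ℝ) < r k := fun k => Real.exp_pos _
  have hr1 : ∀ k, (1:ℝ) ≤ r k := fun k => Real.one_le_exp (Nat.cast_nonneg k)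
  have hNpos : ∀ k, (0:ℝ) < (N k : ℝ) := by
    intro k
    have : 0 < N k := by show 0 < M + 6 * k + 13; omega
    exact_mod_cast this
  have hsqN : ∀ k, (1:ℝ) ≤ Real.sqrt (N k) := by
    intro k
    rw [show (1:ℝ) = Real.sqrt 1 from Real.sqrt_one.symm]
    apply Real.sqrt_le_sqrt
    have : 1 ≤ N k := by show 1 ≤ M + 6 * k + 13; omega
    exact_mod_cast this
  have hs0 : ∀ k, 0 < s k := fun k => div_pos (hr0 k) (lt_of_lt_of_le one_pos (hsqN k))
  have hsr : ∀ k, s k ≤ r k := fun k => div_le_self (hr0 k).le (hsqN k)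
  have hsq : ∀ k, (s k) ^ 2 = (r k) ^ 2 / (N k : ℝ) := by
    intro k
    rw [hsdef]
    simp only
    rw [div_pow, Real.sq_sqrt (Nat.cast_nonneg _)]
  -- sets
  set A : ℕ → Set ℂ := fun k => Metric.closedBall (0:ℂ) (2 * r k) \ Metric.ball (0:ℂ) (r k)
    with hA
  set Bad : ℕ → Set ℂ := fun k => ⋃ n ∈ Finset.range (N k), Metric.ball (γ n) (s k) with hBad
  set G : ℕ → Set ℂ := fun k => A k \ Bad k with hG
  have hGm : ∀ k, MeasurableSet (G k) := by
    intro k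
    refine (measurableSet_closedBall.diff measurableSet_ball).diff ?_
    exact MeasurableSet.biUnion (Finset.range (N k)).countable_toSet
      fun n _ => measurableSet_ball
  -- volume estimates
  have hvolA : ∀ k, volume (A k) = ENNReal.ofReal (3 * Real.pi * (r k) ^ 2) := by
    intro k
    rw [hA]
    simp only
    rw [measure_diff (Metric.ball_subset_closedBall.trans
          (Metric.closedBall_subset_closedBall (by nlinarith [hr0 k])))
        measurableSet_ball.nullMeasurableSet measure_ball_lt_top.ne,
      Complex.volume_closedBall, Complex.volume_ball,
      ofReal_sq_pi _ (by nlinarith [hr0 k]), ofReal_sq_pi _ (hr0 k).le,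
      ← ENNReal.ofReal_sub _ (by positivity)]
    congr 1
    ring
  have hvolBad : ∀ k, volume (Bad k) ≤ ENNReal.ofReal (Real.pi * (r k) ^ 2) := by
    intro k
    rw [hBad]
    simp only
    refine (measure_biUnion_finset_le _ _).trans ?_
    have hone : ∀ n ∈ Finset.range (N k),
        volume (Metric.ball (γ n) (s k)) = ENNReal.ofReal ((s k) ^ 2 * Real.pi) := by
      intro n _
      rw [Complex.volume_ball, ofReal_sq_pi _ (hs0 k).le]
    rw [Finset.sum_congr rfl hone, Finset.sum_const, Finset.card_range, nsmul_eq_mul]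
    rw [← ENNReal.ofReal_natCast, ← ENNReal.ofReal_mul (Nat.cast_nonneg _)]
    apply ENNReal.ofReal_le_ofReal
    rw [← mul_assoc]
    rw [show (N k : ℝ) * (s k) ^ 2 * Real.pi = (N k : ℝ) * ((r k)^2 / (N k : ℝ)) * Real.pi by
      rw [← hsq k]]
    rw [mul_div_cancel₀ _ (hNpos k).ne']
    ring_nf
    exact le_rfl
  have hvolG : ∀ k, ENNReal.ofReal (2 * Real.pi * (r k) ^ 2) ≤ volume (G k) := by
    intro k
    refine le_trans ?_ (le_measure_diff)
    calc ENNReal.ofReal (2 * Real.pi * (r k) ^ 2)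
        = ENNReal.ofReal (3 * Real.pi * (r k) ^ 2) - ENNReal.ofReal (Real.pi * (r k) ^ 2) := by
          rw [← ENNReal.ofReal_sub _ (by positivity)]
          congr 1
          ring
      _ ≤ volume (A k) - volume (Bad k) := by
          rw [hvolA k]
          exact tsub_le_tsub le_rfl (hvolBad k)
  -- distance lower bound on G k
  have hzabs : ∀ k, ∀ z ∈ G k, r k ≤ ‖z‖ ∧ ‖z‖ ≤ 2 * r k := by
    intro k z hz
    obtain ⟨⟨h1, h2⟩, -⟩ := hz
    rw [Metric.mem_closedBall, dist_zero_right] at h1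
    rw [Metric.mem_ball, dist_zero_right] at h2
    push_neg at h2
    exact ⟨h2, h1⟩
  have hdist : ∀ k, ∀ z ∈ G k, s k ≤ Metric.infDist z (Set.range γ) := by
    intro k z hz
    apply le_infDist_of_forall ⟨γ 0, Set.mem_range_self 0⟩ (hs0 k).le
    rintro y ⟨n, rfl⟩
    rcases lt_or_ge n (N k) with hn | hn
    · have : z ∉ Metric.ball (γ n) (s k) := by
        intro hmem
        exact hz.2 (Set.mem_biUnion (Finset.mem_range.2 hn) hmem)
      rw [Metric.mem_ball, dist_comm] at this
      push_neg at this
      rwa [dist_comm] at this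
    · have h4 : 4 * r k < ‖γ n‖ := hout k n hn
      have h2 : ‖z‖ ≤ 2 * r k := (hzabs k z hz).2
      have hge : ‖γ n‖ - ‖z‖ ≤ dist z (γ n) := by
        rw [dist_eq_norm, norm_sub_rev]
        exact (norm_sub_norm_le _ _).trans_eq' (by rfl)
      have hsr' := hsr k
      have hr0' := hr0 k
      linarith
  -- pointwise lower bound on f
  have hfk : ∀ k, ∀ z ∈ G k,
      (s k) ^ 2 / (3 * r k) ^ (3 + (1:ℝ)) ≤ f z := by
    intro k z hz
    rw [hf]
    apply div_le_div₀ (sq_nonneg _)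
      (pow_le_pow_left₀ (hs0 k).le (hdist k z hz) 2)
      (Real.rpow_pos_of_pos (hbase z) _)
    apply Real.rpow_le_rpow (hbase z).le _ (by norm_num)
    have := (hzabs k z hz).2
    have := hr1 k
    linarith
  -- per-annulus lintegral lower bound
  have hlint : ∀ k, ENNReal.ofReal (2 * Real.pi / (81 * (N k : ℝ)))
      ≤ ∫⁻ z in G k, ENNReal.ofReal (f z) := by
    intro k
    have hc : (s k) ^ 2 / (3 * r k) ^ (3 + (1:ℝ)) * (2 * Real.pi * (r k) ^ 2)
        = 2 * Real.pi / (81 * (N k : ℝ)) := by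
      have h34 : (3 * r k) ^ (3 + (1:ℝ)) = (3 * r k) ^ (4:ℕ) := by
        rw [← Real.rpow_natCast (3 * r k) 4]
        norm_num
      rw [h34, hsq k]
      have hrk := (hr0 k).ne'
      field_simp
      ring
    calc ENNReal.ofReal (2 * Real.pi / (81 * (N k : ℝ)))
        = ENNReal.ofReal ((s k) ^ 2 / (3 * r k) ^ (3 + (1:ℝ)))
            * ENNReal.ofReal (2 * Real.pi * (r k) ^ 2) := by
          rw [← ENNReal.ofReal_mul (by positivity), hc]
      _ ≤ ENNReal.ofReal ((s k) ^ 2 / (3 * r k) ^ (3 + (1:ℝ))) * volume (G k) := by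
          exact mul_le_mul_right (hvolG k) _
      _ = ∫⁻ _ in G k, ENNReal.ofReal ((s k) ^ 2 / (3 * r k) ^ (3 + (1:ℝ))) := by
          rw [setLIntegral_const]
      _ ≤ ∫⁻ z in G k, ENNReal.ofReal (f z) := by
          apply setLIntegral_mono' (hGm k)
          exact fun z hz => ENNReal.ofReal_le_ofReal (hfk k z hz)
  -- disjointness
  have hGd : Pairwise (Function.onFun Disjoint G) := by
    have key : ∀ j k : ℕ, j < k → Disjoint (G j) (G k) := by
      intro j k hjk
      rw [Set.disjoint_left]
      intro z hzj hzk
      have h1 : ‖z‖ ≤ 2 * r j := (hzabs j z hzj).2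
      have h2 : r k ≤ ‖z‖ := (hzabs k z hzk).1
      have hrr : 2 * r j < r k := by
        have hje : r j * Real.exp 1 ≤ r k := by
          rw [hrdef]
          simp only
          rw [← Real.exp_add]
          apply Real.exp_le_exp.2
          have : (j : ℝ) + 1 ≤ k := by exact_mod_cast hjk
          linarith
        have he : (2:ℝ) < Real.exp 1 := by
          have := Real.exp_one_gt_d9
          linarith
        nlinarith [hr0 j]
      linarith
    intro j k hjk
    rcases hjk.lt_or_gt with h | h
    · exact key j k h
    · exact (key k j h).symm
  -- finiteness from integrability
  have hfin : (∫⁻ z, ENNReal.ofReal (f z)) < ⊤ := by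
    have := hInt.2
    rwa [hasFiniteIntegral_iff_ofReal (ae_of_all _ hfnn)] at this
  -- the divergent series
  set C : ℝ := 2 * Real.pi / (81 * ((M : ℝ) + 19)) with hC
  have hCpos : 0 < C := by
    rw [hC]
    have := Real.pi_pos
    positivity
  have hterm : ∀ k : ℕ, ENNReal.ofReal (C / ((k:ℝ) + 1))
      ≤ ∫⁻ z in G k, ENNReal.ofReal (f z) := by
    intro k
    refine le_trans (ENNReal.ofReal_le_ofReal ?_) (hlint k)
    have hcast : (N k : ℝ) = (M:ℝ) + 6 * k + 13 := by
      show ((M + 6 * k + 13 : ℕ) : ℝ) = _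
      push_cast
      ring
    have hNle : (81:ℝ) * (N k : ℝ) ≤ 81 * ((M:ℝ) + 19) * ((k:ℝ) + 1) := by
      rw [hcast]
      nlinarith [(Nat.cast_nonneg M : (0:ℝ) ≤ M), (Nat.cast_nonneg k : (0:ℝ) ≤ k)]
    rw [hC, div_div]
    have hpi := Real.pi_pos
    exact div_le_div_of_nonneg_left (by positivity) (by nlinarith [hNpos k]) hNle
  have hsum : (∑' k : ℕ, ENNReal.ofReal (C / ((k:ℝ) + 1))) ≤ ∫⁻ z, ENNReal.ofReal (f z) := by
    calc (∑' k : ℕ, ENNReal.ofReal (C / ((k:ℝ) + 1)))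
        ≤ ∑' k : ℕ, ∫⁻ z in G k, ENNReal.ofReal (f z) := ENNReal.tsum_le_tsum hterm
      _ = ∫⁻ z in ⋃ k, G k, ENNReal.ofReal (f z) :=
          (lintegral_iUnion hGm hGd _).symm
      _ ≤ ∫⁻ z, ENNReal.ofReal (f z) := setLIntegral_le_lintegral _ _
  have htop : (∑' k : ℕ, ENNReal.ofReal (C / ((k:ℝ) + 1))) = ⊤ := by
    by_contra h
    have h1 : Summable (fun k : ℕ => (C / ((k:ℝ) + 1)).toNNReal) :=
      ENNReal.tsum_coe_ne_top_iff_summable.1 h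
    have h2 : Summable (fun k : ℕ => C / ((k:ℝ) + 1)) := by
      have := NNReal.summable_coe.2 h1
      refine this.congr fun k => ?_
      exact Real.coe_toNNReal _ (by positivity)
    have h3 : Summable (fun k : ℕ => 1 / ((k:ℝ) + 1)) := by
      have := h2.mul_left C⁻¹
      refine this.congr fun k => ?_
      field_simp
    have h4 : Summable (fun n : ℕ => 1 / (n : ℝ)) := by
      rw [← summable_nat_add_iff 1]
      refine h3.congr fun k => ?_
      push_cast
      ring_nf
    exact Real.not_summable_one_div_natCast h4
  rw [htop] at hsum
  exact absurd (lt_of_le_of_lt hsum hfin) (lt_irrefl ⊤)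

lemma cont_integrand (γ : ℕ → ℂ) (α : ℝ) :
    Continuous fun z : ℂ =>
      (Metric.infDist z (Set.range γ)) ^ 2 / (1 + ‖z‖) ^ (3 + α) := by
  have hb : ∀ z : ℂ, (0:ℝ) < 1 + ‖z‖ := fun z => by positivity
  apply Continuous.div
  · exact (Metric.continuous_infDist_pt _).pow 2
  · exact (continuous_const.add continuous_norm).rpow_const fun z => Or.inl (hb z).ne'
  · exact fun z => (Real.rpow_pos_of_pos (hb z) _).ne'

theorem dist_integral_finite_iff (β : ℝ) (hβ0 : 0 < β) (hβ1 : β < 1)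
    (γ : ℕ → ℂ) (δ : ℕ → ℝ)
    (hmod : ∀ n : ℕ, ‖γ n‖ =
      Real.exp (((1 + n : ℝ) / (1 + β)) ^ (1 / β) + δ n))
    (hδ : ∃ B : ℝ, ∀ n : ℕ, |δ n| ≤ B * (1 + n : ℝ) ^ (1 / β - 1))
    (α : ℝ) :
    Integrable (fun z : ℂ =>
        (Metric.infDist z (Set.range γ)) ^ 2 / (1 + ‖z‖) ^ (3 + α)) ↔ 1 < α := by
  have hbase : ∀ z : ℂ, (0:ℝ) < 1 + ‖z‖ := fun z => by positivity
  have hnonneg : ∀ (a : ℝ) (z : ℂ),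
      0 ≤ (Metric.infDist z (Set.range γ)) ^ 2 / (1 + ‖z‖) ^ (3 + a) := by
    intro a z
    have := Real.rpow_pos_of_pos (hbase z) (3 + a)
    positivity
  constructor
  · -- hard direction
    intro hInt
    by_contra hα
    push_neg at hα   -- α ≤ 1
    -- reduce to α = 1
    have h1 : Integrable (fun z : ℂ =>
        (Metric.infDist z (Set.range γ)) ^ 2 / (1 + ‖z‖) ^ (3 + (1:ℝ))) := by
      refine hInt.mono ((cont_integrand γ 1).aestronglyMeasurable) ?_
      filter_upwards with z
      rw [Real.norm_of_nonneg (hnonneg 1 z), Real.norm_of_nonneg (hnonneg α z)]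
      have hle : (1 + ‖z‖) ^ (3 + α) ≤ (1 + ‖z‖) ^ (3 + (1:ℝ)) :=
        Real.rpow_le_rpow_of_exponent_le (by have := (norm_nonneg z); linarith)
          (by linarith)
      exact div_le_div₀ (sq_nonneg _) le_rfl (Real.rpow_pos_of_pos (hbase z) _) hle
    exact not_integrable_one β hβ0 hβ1 γ δ hmod hδ h1
  · -- easy direction
    intro hα
    have h2 : (Module.finrank ℝ ℂ : ℝ) < 1 + α := by
      rw [Complex.finrank_real_complex]; push_cast; linarith
    have base : Integrable (fun z : ℂ => (1 + ‖z‖) ^ (-(1 + α))) :=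
      integrable_one_add_norm h2
    refine ((base.const_mul ((1 + ‖γ 0‖) ^ 2)).mono'
      ((cont_integrand γ α).aestronglyMeasurable) ?_)
    filter_upwards with z
    rw [Real.norm_of_nonneg (hnonneg α z)]
    have habs : ‖z‖ = ‖z‖ := rfl
    have hd : Metric.infDist z (Set.range γ) ≤ (1 + ‖γ 0‖) * (1 + ‖z‖) := by
      refine le_trans (Metric.infDist_le_dist_of_mem (Set.mem_range_self 0)) ?_
      have : dist z (γ 0) ≤ ‖z‖ + ‖γ 0‖ := by
        rw [dist_eq_norm]
        exact (norm_sub_le _ _)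
      nlinarith [norm_nonneg z, norm_nonneg (γ 0)]
    have hd0 : (0:ℝ) ≤ Metric.infDist z (Set.range γ) := Metric.infDist_nonneg
    have hnum : (Metric.infDist z (Set.range γ))^2
        ≤ (1 + ‖γ 0‖)^2 * (1 + ‖z‖)^2 := by
      rw [← mul_pow]
      exact pow_le_pow_left₀ hd0 hd 2
    have key : (Metric.infDist z (Set.range γ)) ^ 2 / (1 + ‖z‖) ^ (3 + α)
        ≤ (1 + ‖γ 0‖)^2 * ((1 + ‖z‖) ^ (-(1+α))) := by
      have hpow : (1 + ‖z‖)^(2:ℝ) / (1 + ‖z‖) ^ (3 + α)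
          = (1 + ‖z‖) ^ (-(1+α)) := by
        rw [← Real.rpow_sub (hbase z)]
        congr 1
        ring
      calc (Metric.infDist z (Set.range γ)) ^ 2 / (1 + ‖z‖) ^ (3 + α)
          ≤ ((1 + ‖γ 0‖)^2 * (1 + ‖z‖)^2) / (1 + ‖z‖) ^ (3 + α) := by
            gcongr
        _ = (1 + ‖γ 0‖)^2 * ((1 + ‖z‖)^(2:ℝ) / (1 + ‖z‖) ^ (3 + α)) := by
            rw [mul_div_assoc, Real.rpow_two]
        _ = (1 + ‖γ 0‖)^2 * ((1 + ‖z‖) ^ (-(1+α))) := by rw [hpow, habs]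
    exact key
end

section
/- Let 0<β<1 and u_n=((1+n)/(1+β))^{1/β}. For nonnegative integers n,m define α(n,m) = β((1+n)/(1+β))^{(1+β)/β} − β((1+m)/(1+β))^{(1+β)/β} + ∑_{k=0}^{m} u_k − ∑_{k=0}^{n} u_k. Then as n,m→∞, α(n,m) = (1/2)(u_m − u_n) + ((1+o(1))/(12β(1+β)))·(((1+m)/(1+β))^{(1−β)/β} − ((1+n)/(1+β))^{(1−β)/β}); in particular there is a constant c_β>0 such that α(n,m) ≥ c_β|u_m − u_n| − C for some C>0 whenever m ≥ n. -/
open Filter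

open Set

noncomputable def u (β : ℝ) (n : ℕ) : ℝ := ((1 + n : ℝ) / (1 + β)) ^ (1 / β)

noncomputable def alph (β : ℝ) (n m : ℕ) : ℝ :=
  β * ((1 + n : ℝ) / (1 + β)) ^ ((1 + β) / β) -
    β * ((1 + m : ℝ) / (1 + β)) ^ ((1 + β) / β) +
    (∑ k ∈ Finset.range (m + 1), u β k) - ∑ k ∈ Finset.range (n + 1), u β k


open Set
open Set

/-- If `h 0 = 0` and `h` has nonnegative derivative on `[0,1]`, then `h ≥ 0` on `[0,1]`. -/
lemma nonneg_of_deriv_nonneg (h h' : ℝ → ℝ) (h0 : h 0 = 0)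
    (hd : ∀ t ∈ Icc (0:ℝ) 1, HasDerivAt h (h' t) t)
    (hb : ∀ t ∈ Icc (0:ℝ) 1, 0 ≤ h' t) :
    ∀ t ∈ Icc (0:ℝ) 1, 0 ≤ h t := by
  have hmono : MonotoneOn h (Icc (0:ℝ) 1) := by
    apply monotoneOn_of_deriv_nonneg (convex_Icc 0 1)
    · exact fun t ht => (hd t ht).continuousAt.continuousWithinAt
    · intro t ht
      exact ((hd t (interior_subset ht)).differentiableAt).differentiableWithinAt
    · intro t ht
      rw [(hd t (interior_subset ht)).deriv]
      exact hb t (interior_subset ht)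
  intro t ht
  have := hmono (left_mem_Icc.2 zero_le_one) ht ht.1
  simpa [h0] using this

/-- Integration step for remainder bounds. -/
lemma abs_le_of_deriv_abs_le (r r' : ℝ → ℝ) (M : ℝ) (k : ℕ) (h0 : r 0 = 0)
    (hd : ∀ t ∈ Icc (0:ℝ) 1, HasDerivAt r (r' t) t)
    (hb : ∀ t ∈ Icc (0:ℝ) 1, |r' t| ≤ M * t ^ k) :
    ∀ t ∈ Icc (0:ℝ) 1, |r t| ≤ M / (k + 1) * t ^ (k + 1) := by
  have hup : ∀ t ∈ Icc (0:ℝ) 1, 0 ≤ M / (k+1) * t ^ (k+1) - r t := by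
    apply nonneg_of_deriv_nonneg _ (fun t => M * t ^ k - r' t) (by simp [h0])
    · intro t ht
      exact ((hasDerivAt_pow (k+1) t).const_mul (M / (k+1))).sub (hd t ht) |>.congr_deriv (by
        push_cast
        field_simp)
    · intro t ht
      have := (abs_le.1 (hb t ht)).2
      linarith
  have hdn : ∀ t ∈ Icc (0:ℝ) 1, 0 ≤ M / (k+1) * t ^ (k+1) + r t := by
    apply nonneg_of_deriv_nonneg _ (fun t => M * t ^ k + r' t) (by simp [h0])
    · intro t ht
      exact ((hasDerivAt_pow (k+1) t).const_mul (M / (k+1))).add (hd t ht) |>.congr_deriv (by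
        push_cast
        field_simp)
    · intro t ht
      have := (abs_le.1 (hb t ht)).1
      linarith
  intro t ht
  have h1 := hup t ht
  have h2 := hdn t ht
  rw [abs_le]
  constructor <;> linarith
open Set

lemma hasDerivAt_one_add_rpow (p t : ℝ) (ht : 0 ≤ t) :
    HasDerivAt (fun x : ℝ => (1 + x) ^ p) (p * (1 + t) ^ (p - 1)) t := by
  have h : HasDerivAt (fun x : ℝ => 1 + x) 1 t := (hasDerivAt_id t).const_add 1
  have := h.rpow_const (p := p) (Or.inl (by norm_num; linarith))
  simpa using this.congr_deriv (by ring)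

lemma one_add_rpow_le (q : ℝ) {t : ℝ} (ht : t ∈ Icc (0:ℝ) 1) :
    (1 + t) ^ q ≤ 2 ^ q + 1 := by
  obtain ht1 := ht.1; obtain ht2 := ht.2
  rcases le_or_gt 0 q with hq | hq
  · have : (1 + t) ^ q ≤ (2:ℝ) ^ q :=
      Real.rpow_le_rpow (by linarith) (by linarith) hq
    have h2 : (0:ℝ) ≤ 1 := zero_le_one
    linarith
  · have h1 : (1 + t) ^ q ≤ 1 :=
      Real.rpow_le_one_of_one_le_of_nonpos (by linarith) hq.le
    have : (0:ℝ) < 2 ^ q := Real.rpow_pos_of_pos (by norm_num) q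
    linarith

noncomputable def M2 (p : ℝ) : ℝ := |p * (p - 1)| * (2 ^ (p - 2) + 1)
noncomputable def M4 (p : ℝ) : ℝ := |p * (p - 1) * (p - 2) * (p - 3)| * (2 ^ (p - 4) + 1)

lemma M2_nonneg (p : ℝ) : 0 ≤ M2 p := by
  have : (0:ℝ) < 2 ^ (p - 2) := Real.rpow_pos_of_pos (by norm_num) _
  exact mul_nonneg (abs_nonneg _) (by linarith)

lemma M4_nonneg (p : ℝ) : 0 ≤ M4 p := by
  have : (0:ℝ) < 2 ^ (p - 4) := Real.rpow_pos_of_pos (by norm_num) _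
  exact mul_nonneg (abs_nonneg _) (by linarith)

lemma taylor1_bound (p : ℝ) : ∀ t ∈ Icc (0:ℝ) 1,
    |(1 + t) ^ p - (1 + p * t)| ≤ M2 p / 2 * t ^ 2 := by
  have h1 : ∀ t ∈ Icc (0:ℝ) 1, |p * ((1 + t) ^ (p-1) - 1)| ≤ M2 p / 1 * t ^ 1 := by
    have key := abs_le_of_deriv_abs_le (fun t => p * ((1 + t) ^ (p-1) - 1))
      (fun t => p * (p - 1) * (1 + t) ^ (p - 2)) (M2 p) 0 (by simp) ?_ ?_
    · intro t ht
      have h := key t ht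
      norm_num at h ⊢
      convert h using 2
    · intro t ht
      have := ((hasDerivAt_one_add_rpow (p-1) t ht.1).sub_const 1).const_mul p
      have e : p - 1 - 1 = p - 2 := by ring
      rw [e] at this
      exact this.congr_deriv (by ring)
    · intro t ht
      rw [abs_mul, pow_zero, mul_one, M2]
      have h2 : |(1 + t) ^ (p-2)| = (1 + t) ^ (p-2) :=
        abs_of_nonneg (Real.rpow_nonneg (by linarith [ht.1]) _)
      rw [h2]
      exact mul_le_mul_of_nonneg_left
        (le_trans (one_add_rpow_le _ ht) le_rfl) (abs_nonneg _)
  have h0 := abs_le_of_deriv_abs_le (fun t => (1 + t) ^ p - (1 + p * t))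
      (fun t => p * ((1 + t) ^ (p-1) - 1)) (M2 p / 1) 1 (by simp) ?_ ?_
  · intro t ht
    have := h0 t ht
    norm_num at this ⊢
    convert this using 2
  · intro t ht
    have := ((hasDerivAt_one_add_rpow p t ht.1).sub
      (((hasDerivAt_id t).const_mul p).const_add 1))
    exact this.congr_deriv (by ring)
  · intro t ht
    simpa using h1 t ht

lemma taylor3_bound (p : ℝ) : ∀ t ∈ Icc (0:ℝ) 1,
    |(1 + t) ^ p - (1 + p * t + p * (p-1)/2 * t^2 + p * (p-1) * (p-2)/6 * t^3)|
      ≤ M4 p / 24 * t ^ 4 := by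
  have h3 : ∀ t ∈ Icc (0:ℝ) 1,
      |p * (p-1) * (p-2) * ((1 + t) ^ (p-3) - 1)| ≤ M4 p / 1 * t ^ 1 := by
    have key := abs_le_of_deriv_abs_le (fun t => p * (p-1) * (p-2) * ((1 + t) ^ (p-3) - 1))
      (fun t => p * (p-1) * (p-2) * (p-3) * (1 + t) ^ (p - 4)) (M4 p) 0 (by simp) ?_ ?_
    · intro t ht
      have h := key t ht
      norm_num at h ⊢
      convert h using 2
    · intro t ht
      have := ((hasDerivAt_one_add_rpow (p-3) t ht.1).sub_const 1).const_mul (p * (p-1) * (p-2))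
      have e : p - 3 - 1 = p - 4 := by ring
      rw [e] at this
      exact this.congr_deriv (by ring)
    · intro t ht
      rw [abs_mul, pow_zero, mul_one, M4]
      have h2 : |(1 + t) ^ (p-4)| = (1 + t) ^ (p-4) :=
        abs_of_nonneg (Real.rpow_nonneg (by linarith [ht.1]) _)
      rw [h2]
      exact mul_le_mul_of_nonneg_left (one_add_rpow_le _ ht) (abs_nonneg _)
  have h2 : ∀ t ∈ Icc (0:ℝ) 1,
      |p * (p-1) * ((1 + t) ^ (p-2) - 1 - (p-2) * t)| ≤ M4 p / 2 * t ^ 2 := by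
    have := abs_le_of_deriv_abs_le
      (fun t => p * (p-1) * ((1 + t) ^ (p-2) - 1 - (p-2) * t))
      (fun t => p * (p-1) * (p-2) * ((1 + t) ^ (p-3) - 1)) (M4 p / 1) 1 (by simp) ?_ ?_
    · intro t ht
      have h := this t ht
      norm_num at h ⊢
      convert h using 2
    · intro t ht
      have hda := (((hasDerivAt_one_add_rpow (p-2) t ht.1).sub_const 1).sub
        ((hasDerivAt_id t).const_mul (p-2))).const_mul (p * (p-1))
      have e : p - 2 - 1 = p - 3 := by ring
      rw [e] at hda
      exact hda.congr_deriv (by ring)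
    · intro t ht
      simpa using h3 t ht
  have h1 : ∀ t ∈ Icc (0:ℝ) 1,
      |p * ((1 + t) ^ (p-1) - 1 - (p-1) * t - (p-1)*(p-2)/2 * t^2)| ≤ M4 p / 6 * t ^ 3 := by
    have := abs_le_of_deriv_abs_le
      (fun t => p * ((1 + t) ^ (p-1) - 1 - (p-1) * t - (p-1)*(p-2)/2 * t^2))
      (fun t => p * (p-1) * ((1 + t) ^ (p-2) - 1 - (p-2) * t)) (M4 p / 2) 2 (by simp) ?_ ?_
    · intro t ht
      have h := this t ht
      norm_num at h ⊢
      convert h using 2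
      ring
    · intro t ht
      have hda := ((((hasDerivAt_one_add_rpow (p-1) t ht.1).sub_const 1).sub
        ((hasDerivAt_id t).const_mul (p-1))).sub
        ((hasDerivAt_pow 2 t).const_mul ((p-1)*(p-2)/2))).const_mul p
      have e : p - 1 - 1 = p - 2 := by ring
      rw [e] at hda
      exact hda.congr_deriv (by push_cast; ring)
    · exact h2
  have := abs_le_of_deriv_abs_le
    (fun t => (1 + t) ^ p - (1 + p * t + p * (p-1)/2 * t^2 + p * (p-1) * (p-2)/6 * t^3))
    (fun t => p * ((1 + t) ^ (p-1) - 1 - (p-1) * t - (p-1)*(p-2)/2 * t^2)) (M4 p / 6) 3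
    (by simp) ?_ ?_
  · intro t ht
    have h := this t ht
    norm_num at h ⊢
    convert h using 2
    ring
  · intro t ht
    have hda := (hasDerivAt_one_add_rpow p t ht.1).sub
      ((((hasDerivAt_id t).const_mul p).const_add 1).add
        (((hasDerivAt_pow 2 t).const_mul (p*(p-1)/2))) |>.add
        ((hasDerivAt_pow 3 t).const_mul (p*(p-1)*(p-2)/6)))
    exact hda.congr_deriv (by push_cast; ring)
  · exact h1

lemma rpow_lower_bound (q : ℝ) (hq : 0 < q) : ∀ t ∈ Icc (0:ℝ) 1,
    q * min 1 (2 ^ (q-1)) * t ≤ (1 + t) ^ q - 1 := by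
  have key := nonneg_of_deriv_nonneg (fun t => (1 + t) ^ q - 1 - q * min 1 (2 ^ (q-1)) * t)
    (fun t => q * (1 + t) ^ (q-1) - q * min 1 (2 ^ (q-1))) (by simp) ?_ ?_
  · intro t ht
    have := key t ht
    linarith
  · intro t ht
    exact (((hasDerivAt_one_add_rpow q t ht.1).sub_const 1).sub
      (((hasDerivAt_id t).const_mul (q * min 1 (2 ^ (q-1)))))).congr_deriv (by ring)
  · intro t ht
    have hmin : min 1 ((2:ℝ) ^ (q-1)) ≤ (1 + t) ^ (q-1) := by
      rcases le_or_gt 1 q with h1 | h1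
      · exact le_trans (min_le_left _ _)
          (Real.one_le_rpow (by linarith [ht.1]) (by linarith))
      · exact le_trans (min_le_right _ _)
          (Real.rpow_le_rpow_of_nonpos (by linarith [ht.1]) (by linarith [ht.2])
            (by linarith))
    have := mul_le_mul_of_nonneg_left hmin hq.le
    show 0 ≤ q * (1 + t) ^ (q-1) - q * min 1 (2 ^ (q-1))
    linarith

noncomputable def theta (s t : ℝ) : ℝ :=
  t * (1 + (1+t)^s) / 2 - ((1+t)^(s+1) - 1) / (s+1) - s * t^2 / 12 * ((1+t)^(s-1) - 1)

lemma theta_bound (s : ℝ) (hs : 0 < s) : ∃ K, 0 ≤ K ∧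
    ∀ t ∈ Icc (0:ℝ) 1, |theta s t| ≤ K * t ^ 4 := by
  have hM0 := M4_nonneg s
  have hM1 := M4_nonneg (s+1)
  have hM2 := M2_nonneg (s-1)
  have hs1 : (0:ℝ) < s + 1 := by linarith
  refine ⟨|s*(s-1)*(s-2)|/12 + M4 s / 48 + M4 (s+1) / (24*(s+1)) + s * M2 (s-1) / 24,
    by positivity, ?_⟩
  intro t ht
  obtain ⟨ht0, ht1⟩ := ht
  set R0 := (1+t)^s - (1 + s*t + s*(s-1)/2*t^2 + s*(s-1)*(s-2)/6*t^3) with hR0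
  set R1 := (1+t)^(s+1) -
    (1 + (s+1)*t + (s+1)*((s+1)-1)/2*t^2 + (s+1)*((s+1)-1)*((s+1)-2)/6*t^3) with hR1
  set R2 := (1+t)^(s-1) - (1 + (s-1)*t) with hR2
  have expand : theta s t = s*(s-1)*(s-2)/12*t^4 + t*R0/2 - R1/(s+1) - s*t^2/12*R2 := by
    rw [hR0, hR1, hR2]
    unfold theta
    field_simp
    ring
  have b0 : |R0| ≤ M4 s / 24 * t^4 := by rw [hR0]; exact taylor3_bound s t ⟨ht0, ht1⟩
  have b1 : |R1| ≤ M4 (s+1) / 24 * t^4 := by rw [hR1]; exact taylor3_bound (s+1) t ⟨ht0, ht1⟩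
  have b2 : |R2| ≤ M2 (s-1) / 2 * t^2 := by rw [hR2]; exact taylor1_bound (s-1) t ⟨ht0, ht1⟩
  have ht5 : t^5 ≤ t^4 := pow_le_pow_of_le_one ht0 ht1 (by norm_num)
  rw [expand]
  have e1 : |t*R0/2| ≤ M4 s / 48 * t^4 := by
    rw [abs_div, abs_mul, abs_of_nonneg ht0, abs_of_nonneg (by norm_num : (0:ℝ) ≤ 2)]
    rw [div_le_iff₀ (by norm_num : (0:ℝ) < 2)]
    calc t * |R0| ≤ t * (M4 s / 24 * t^4) := mul_le_mul_of_nonneg_left b0 ht0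
    _ = M4 s / 24 * t^5 := by ring
    _ ≤ M4 s / 24 * t^4 := mul_le_mul_of_nonneg_left ht5 (by positivity)
    _ = M4 s / 48 * t^4 * 2 := by ring
  have e2 : |R1/(s+1)| ≤ M4 (s+1) / (24*(s+1)) * t^4 := by
    rw [abs_div, abs_of_pos hs1, div_le_iff₀ hs1]
    calc |R1| ≤ M4 (s+1) / 24 * t^4 := b1
    _ = M4 (s+1) / (24*(s+1)) * t^4 * (s+1) := by field_simp
  have e3 : |s*t^2/12*R2| ≤ s * M2 (s-1) / 24 * t^4 := by
    rw [abs_mul, abs_of_nonneg (by positivity : (0:ℝ) ≤ s*t^2/12)]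
    calc s*t^2/12 * |R2| ≤ s*t^2/12 * (M2 (s-1)/2 * t^2) :=
          mul_le_mul_of_nonneg_left b2 (by positivity)
    _ = s * M2 (s-1) / 24 * t^4 := by ring
  have e0 : |s*(s-1)*(s-2)/12*t^4| = |s*(s-1)*(s-2)|/12 * t^4 := by
    rw [abs_mul, abs_div]
    simp [abs_of_nonneg (pow_nonneg ht0 4)]
  have tri : ∀ a b c d : ℝ, |a + b - c - d| ≤ |a| + |b| + |c| + |d| := by
    intro a b c d
    have h1 : a + b - c - d = a + b + -c + -d := by ring
    rw [h1]
    calc |a + b + -c + -d| ≤ |a + b + -c| + |-d| := abs_add_le _ _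
    _ ≤ |a + b| + |-c| + |-d| := by linarith [abs_add_le (a+b) (-c)]
    _ ≤ |a| + |b| + |c| + |d| := by
        simp only [abs_neg]
        linarith [abs_add_le a b]
  calc |s*(s-1)*(s-2)/12*t^4 + t*R0/2 - R1/(s+1) - s*t^2/12*R2|
      ≤ |s*(s-1)*(s-2)/12*t^4| + |t*R0/2| + |R1/(s+1)| + |s*t^2/12*R2| := tri _ _ _ _
  _ ≤ (|s*(s-1)*(s-2)|/12 + M4 s / 48 + M4 (s+1) / (24*(s+1)) + s * M2 (s-1) / 24) * t^4 := by
        rw [e0]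
        nlinarith [e1, e2, e3]

noncomputable def fA (β : ℝ) (n : ℕ) : ℝ :=
  (∑ k ∈ Finset.range (n+1), u β k) - β * ((1 + n : ℝ)/(1+β)) ^ ((1+β)/β)

noncomputable def Aa (β : ℝ) (n : ℕ) : ℝ := ((1 + n : ℝ)/(1+β)) ^ ((1-β)/β)

noncomputable def gg (β : ℝ) (n : ℕ) : ℝ :=
  fA β n - (1/2 * u β n + 1/(12*β*(1+β)) * Aa β n)

lemma alph_eq_f (β : ℝ) (n m : ℕ) : alph β n m = fA β m - fA β n := by
  simp only [alph, fA]; ring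

lemma delta_A (β : ℝ) (hβ0 : 0 < β) (k : ℕ) :
    Aa β (k+1) - Aa β k =
      ((1+k:ℝ)/(1+β))^(1/β) * (1+β) * (1/(1+k:ℝ)) *
        ((1 + 1/(1+k:ℝ))^(1/β - 1) - 1) := by
  have hx : (0:ℝ) < 1 + k := by positivity
  have hb : (0:ℝ) < 1 + β := by linarith
  have hw : (0:ℝ) < (1+k:ℝ)/(1+β) := by positivity
  have h1t : (0:ℝ) < 1 + 1/(1+k:ℝ) := by positivity
  have e1 : (1 + ((k:ℝ)+1))/(1+β) = ((1+k:ℝ)/(1+β)) * (1 + 1/(1+k:ℝ)) := by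
    field_simp
    ring
  have e3 : (1-β)/β = 1/β - 1 := by field_simp
  simp only [Aa]
  push_cast
  rw [e1, e3, Real.mul_rpow hw.le h1t.le,
    Real.rpow_sub_one (ne_of_gt hw)]
  field_simp

lemma delta_g (β : ℝ) (hβ0 : 0 < β) (k : ℕ) :
    gg β (k+1) - gg β k =
      ((1+k:ℝ)/(1+β))^(1/β) * (1+k:ℝ) * theta (1/β) (1/(1+k:ℝ)) := by
  have hx : (0:ℝ) < 1 + k := by positivity
  have hb : (0:ℝ) < 1 + β := by linarith
  have hw : (0:ℝ) < (1+k:ℝ)/(1+β) := by positivity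
  have h1t : (0:ℝ) < 1 + 1/(1+k:ℝ) := by positivity
  have hs1 : (1:ℝ)/β + 1 ≠ 0 := by positivity
  have e1 : (1 + ((k:ℝ)+1))/(1+β) = ((1+k:ℝ)/(1+β)) * (1 + 1/(1+k:ℝ)) := by
    field_simp
    ring
  have e2 : (1+β)/β = 1/β + 1 := by field_simp
  have e3 : (1-β)/β = 1/β - 1 := by field_simp
  simp only [gg, fA, Aa, u, theta]
  rw [Finset.sum_range_succ]
  push_cast
  rw [e1, e2, e3,
    Real.mul_rpow hw.le h1t.le, Real.mul_rpow hw.le h1t.le, Real.mul_rpow hw.le h1t.le,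
    Real.rpow_add_one (ne_of_gt hw), Real.rpow_sub_one (ne_of_gt hw)]
  field_simp
  ring

lemma u_nonneg (β : ℝ) (hβ0 : 0 < β) (n : ℕ) : 0 ≤ u β n :=
  Real.rpow_nonneg (div_nonneg (by positivity) (by linarith)) _

lemma u_mono (β : ℝ) (hβ0 : 0 < β) : Monotone (u β) := by
  intro n m hnm
  have hb : (0:ℝ) < 1 + β := by linarith
  apply Real.rpow_le_rpow (by positivity) ?_ (one_div_pos.2 hβ0).le
  gcongr

lemma Aa_mono (β : ℝ) (hβ0 : 0 < β) (hβ1 : β < 1) : StrictMono (Aa β) := by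
  intro n m hnm
  have hb : (0:ℝ) < 1 + β := by linarith
  apply Real.rpow_lt_rpow (by positivity) ?_ (div_pos (by linarith) hβ0)
  gcongr

lemma key_eps (β : ℝ) (hβ0 : 0 < β) (hβ1 : β < 1) :
    ∀ ε > (0:ℝ), ∃ N : ℕ, ∀ k ≥ N,
      |gg β (k+1) - gg β k| ≤ ε * (Aa β (k+1) - Aa β k) := by
  intro ε hε
  obtain ⟨K, hK0, hK⟩ := theta_bound (1/β) (by positivity)
  have hb : (0:ℝ) < 1 + β := by linarith
  have hs1 : (1:ℝ) < 1/β := by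
    rw [lt_div_iff₀ hβ0]; linarith
  set q : ℝ := 1/β - 1 with hq_def
  have hq : 0 < q := by simp only [hq_def]; linarith
  set c0 : ℝ := q * min 1 (2 ^ (q-1)) with hc0_def
  have hc0 : 0 < c0 := by
    have : (0:ℝ) < 2 ^ (q-1) := Real.rpow_pos_of_pos (by norm_num) _
    have : 0 < min 1 ((2:ℝ) ^ (q-1)) := lt_min one_pos this
    exact mul_pos hq this
  set K' : ℝ := K + 1 with hK'_def
  have hK' : 0 < K' := by simp only [hK'_def]; linarith
  refine ⟨⌈K' / (ε * (1+β) * c0)⌉₊, ?_⟩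
  intro k hk
  have hx : (0:ℝ) < 1 + k := by positivity
  set t : ℝ := 1/(1+k:ℝ) with ht_def
  have ht0 : 0 < t := by positivity
  have ht1 : t ≤ 1 := by
    rw [ht_def, div_le_one hx]; linarith [Nat.cast_nonneg (α := ℝ) k]
  set W : ℝ := ((1+k:ℝ)/(1+β))^(1/β) with hW_def
  have hW : 0 < W := Real.rpow_pos_of_pos (by positivity) _
  -- theta bound
  have hth : |theta (1/β) t| ≤ K * t^4 := hK t ⟨ht0.le, ht1⟩
  -- lower bound for C-1
  have hlow : c0 * t ≤ (1 + t)^q - 1 := rpow_lower_bound q hq t ⟨ht0.le, ht1⟩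
  -- N property: K' * t ≤ ε * (1+β) * c0
  have hN : K' ≤ ε * (1+β) * c0 * (1+k) := by
    have h1 : (⌈K' / (ε * (1+β) * c0)⌉₊ : ℝ) ≥ K' / (ε * (1+β) * c0) := Nat.le_ceil _
    have h2 : ((k:ℝ)) ≥ (⌈K' / (ε * (1+β) * c0)⌉₊ : ℝ) := by exact_mod_cast hk
    have h3 : K' / (ε * (1+β) * c0) ≤ 1 + k := by linarith
    calc K' = K' / (ε * (1+β) * c0) * (ε * (1+β) * c0) := by field_simp
    _ ≤ (1+k) * (ε * (1+β) * c0) := by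
        apply mul_le_mul_of_nonneg_right h3 (by positivity)
    _ = ε * (1+β) * c0 * (1+k) := by ring
  rw [delta_g β hβ0 k, delta_A β hβ0 k]
  rw [abs_mul, abs_mul, abs_of_nonneg hW.le, abs_of_nonneg hx.le]
  calc W * (1+k:ℝ) * |theta (1/β) t| ≤ W * (1+k:ℝ) * (K * t^4) := by
        apply mul_le_mul_of_nonneg_left hth (by positivity)
  _ = W * K * t^3 := by
      rw [ht_def]; field_simp
  _ ≤ W * K' * t^3 := by
      apply mul_le_mul_of_nonneg_right ?_ (by positivity)
      apply mul_le_mul_of_nonneg_left (by rw [hK'_def]; linarith) hW.le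
  _ ≤ W * (ε * (1+β) * c0 * (1+k)) * t^3 := by
      apply mul_le_mul_of_nonneg_right ?_ (by positivity)
      exact mul_le_mul_of_nonneg_left hN hW.le
  _ = ε * (W * (1+β) * t * (c0 * t)) := by
      rw [ht_def]; field_simp
  _ ≤ ε * (W * (1+β) * t * ((1+t)^q - 1)) := by
      apply mul_le_mul_of_nonneg_left ?_ hε.le
      apply mul_le_mul_of_nonneg_left hlow (by positivity)
  _ = ε * (W * (1+β) * t * ((1+t)^(1/β - 1) - 1)) := by rw [hq_def]

lemma telescope (β : ℝ) {ε : ℝ} {N : ℕ}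
    (hN : ∀ k ≥ N, |gg β (k+1) - gg β k| ≤ ε * (Aa β (k+1) - Aa β k)) :
    ∀ n m : ℕ, N ≤ n → n ≤ m → |gg β m - gg β n| ≤ ε * (Aa β m - Aa β n) := by
  intro n m hNn hnm
  induction m, hnm using Nat.le_induction with
  | base => simp
  | succ m hnm ih =>
    have h1 := hN m (le_trans hNn hnm)
    calc |gg β (m+1) - gg β n| ≤ |gg β (m+1) - gg β m| + |gg β m - gg β n| :=
          abs_sub_le _ _ _
    _ ≤ ε * (Aa β (m+1) - Aa β m) + ε * (Aa β m - Aa β n) := add_le_add h1 ih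
    _ = ε * (Aa β (m+1) - Aa β n) := by ring

theorem alpha_asymptotics (β : ℝ) (hβ0 : 0 < β) (hβ1 : β < 1) :
    (∃ E : ℕ → ℕ → ℝ,
      (∀ n m : ℕ, alph β n m = (1 / 2) * (u β m - u β n) +
        (1 + E n m) / (12 * β * (1 + β)) *
          (((1 + m : ℝ) / (1 + β)) ^ ((1 - β) / β) -
            ((1 + n : ℝ) / (1 + β)) ^ ((1 - β) / β))) ∧
      Tendsto (fun p : ℕ × ℕ => E p.1 p.2) atTop (nhds 0)) ∧
    ∃ c C : ℝ, 0 < c ∧ 0 < C ∧ ∀ n m : ℕ, n ≤ m →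
      alph β n m ≥ c * |u β m - u β n| - C := by
  have hb : (0:ℝ) < 1 + β := by linarith
  have hκ : (0:ℝ) < 12 * β * (1 + β) := by nlinarith
  have hAarw : ∀ j : ℕ, ((1 + j : ℝ)/(1+β)) ^ ((1-β)/β) = Aa β j := fun _ => rfl
  have hdecomp : ∀ n m : ℕ, fA β m - fA β n = 1/2 * (u β m - u β n) +
      1/(12*β*(1+β)) * (Aa β m - Aa β n) + (gg β m - gg β n) := by
    intro n m
    simp only [gg]
    ring
  constructor
  · refine ⟨fun n m => if n = m then 0 else
      12*β*(1+β) * (gg β m - gg β n) / (Aa β m - Aa β n), ?_, ?_⟩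
    · intro n m
      by_cases h : n = m
      · subst h
        rw [alph_eq_f]
        simp
      · have hAne : Aa β m - Aa β n ≠ 0 := by
          intro hc
          have hc' : Aa β m = Aa β n := by linarith [sub_eq_zero.1 hc]
          exact h ((Aa_mono β hβ0 hβ1).injective hc').symm
        simp only
        rw [alph_eq_f, hdecomp n m, if_neg h, hAarw, hAarw]
        field_simp
        ring
    · rw [NormedAddCommGroup.tendsto_nhds_zero]
      intro ε hε
      obtain ⟨N, hN⟩ := key_eps β hβ0 hβ1 (ε/(2*(12*β*(1+β)))) (by positivity)
      have tele := telescope β hN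
      rw [eventually_atTop]
      refine ⟨(N, N), ?_⟩
      rintro ⟨n, m⟩ hnm
      obtain ⟨h1, h2⟩ := Prod.mk_le_mk.1 hnm
      simp only [Real.norm_eq_abs]
      have hbound : ∀ a c : ℕ, N ≤ a → a < c →
          |12*β*(1+β) * (gg β c - gg β a) / (Aa β c - Aa β a)| ≤ ε/2 := by
        intro a c ha hac
        have ht := tele a c ha hac.le
        have hA : 0 < Aa β c - Aa β a := sub_pos.2 (Aa_mono β hβ0 hβ1 hac)
        rw [abs_div, abs_mul, abs_of_pos hκ, abs_of_pos hA, div_le_iff₀ hA]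
        calc 12*β*(1+β) * |gg β c - gg β a|
            ≤ 12*β*(1+β) * (ε/(2*(12*β*(1+β))) * (Aa β c - Aa β a)) :=
              mul_le_mul_of_nonneg_left ht hκ.le
        _ = ε/2 * (Aa β c - Aa β a) := by field_simp
      rcases lt_trichotomy n m with hlt | heq | hgt
      · rw [if_neg (Nat.ne_of_lt hlt)]
        exact lt_of_le_of_lt (hbound n m h1 hlt) (by linarith)
      · rw [if_pos heq]
        simpa using hε
      · rw [if_neg (Nat.ne_of_gt hgt)]
        have := hbound m n h2 hgt
        have hflip : 12*β*(1+β) * (gg β m - gg β n) / (Aa β m - Aa β n) =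
            12*β*(1+β) * (gg β n - gg β m) / (Aa β n - Aa β m) := by
          have hAne : Aa β n - Aa β m ≠ 0 :=
            ne_of_gt (sub_pos.2 (Aa_mono β hβ0 hβ1 hgt))
          have hAne2 : Aa β m - Aa β n ≠ 0 := by
            intro hc; apply hAne; linarith [sub_eq_zero.1 hc]
          field_simp
          ring
        rw [hflip]
        exact lt_of_le_of_lt this (by linarith)
  · obtain ⟨N, hN⟩ := key_eps β hβ0 hβ1 (1/(12*β*(1+β))) (by positivity)
    have tele := telescope β hN
    set S := ∑ j ∈ Finset.range (N+1), (|fA β j| + 1) with hS_def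
    have hSbound : ∀ j ≤ N, |fA β j| ≤ S := by
      intro j hj
      have h1 : |fA β j| + 1 ≤ S :=
        Finset.single_le_sum (f := fun j => |fA β j| + 1)
          (fun i _ => by positivity) (Finset.mem_range_succ_iff.2 hj)
      linarith
    have hSpos : 0 < S := by
      have h1 : |fA β N| + 1 ≤ S :=
        Finset.single_le_sum (f := fun j => |fA β j| + 1)
          (fun i _ => by positivity) (Finset.mem_range_succ_iff.2 le_rfl)
      linarith [abs_nonneg (fA β N)]
    have huN : 0 ≤ u β N := u_nonneg β hβ0 N
    refine ⟨1/2, 2*S + u β N, by norm_num, by linarith, ?_⟩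
    intro n m hnm
    have habs : |u β m - u β n| = u β m - u β n :=
      abs_of_nonneg (sub_nonneg.2 (u_mono β hβ0 hnm))
    rw [ge_iff_le, habs]
    have hmain : ∀ a c : ℕ, N ≤ a → a ≤ c → 1/2 * (u β c - u β a) ≤ alph β a c := by
      intro a c ha hac
      rw [alph_eq_f, hdecomp a c]
      have ht := tele a c ha hac
      have hA : 0 ≤ Aa β c - Aa β a :=
        sub_nonneg.2 ((Aa_mono β hβ0 hβ1).monotone hac)
      have h2 := (abs_le.1 ht).1
      have h3 : 0 ≤ 1/(12*β*(1+β)) * (Aa β c - Aa β a) := by positivity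
      linarith
    rcases le_or_gt N n with hn | hn
    · have := hmain n m hn hnm
      linarith
    rcases le_or_gt N m with hm | hm
    · -- n < N ≤ m
      have h2 := hmain N m le_rfl hm
      have hsplit : alph β n m = alph β N m + (fA β N - fA β n) := by
        rw [alph_eq_f, alph_eq_f]
        ring
      have b1 := hSbound N le_rfl
      have b2 := hSbound n (by omega)
      have hu1 : u β n ≤ u β N := u_mono β hβ0 (by omega)
      have hu0 : 0 ≤ u β n := u_nonneg β hβ0 n
      have habs1 : -( |fA β N| + |fA β n| ) ≤ fA β N - fA β n := by
        have e1 := neg_abs_le (fA β N)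
        have e2 := le_abs_self (fA β n)
        linarith
      linarith
    · -- m < N
      have b1 := hSbound n (by omega)
      have b2 := hSbound m (by omega)
      have hu1 : u β m ≤ u β N := u_mono β hβ0 hm.le
      have hu0 : 0 ≤ u β n := u_nonneg β hβ0 n
      rw [alph_eq_f]
      have e1 := neg_abs_le (fA β m)
      have e2 := le_abs_self (fA β n)
      linarith
end
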